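/- arXiv:0905.3584 — 5 statements merged into one kernel-verified Lean document; each statement's English description precedes it below -/
import Mathlib

section
/- For the relative neighborhood graph of n points drawn independently and uniformly at random from [0,1]^2, for every constant c > 1, lim_{n→∞} Pr{ maximal degree > c·log n / log log n } = 0; in particular the maximal degree is O(log n / log log n) in probability. -/
open MeasureTheory Filter
open scoped ENNReal

noncomputable section

/-- The Euclidean plane. -/
abbrev E2 := EuclideanSpace ℝ (Fin 2)

/-- The unit square `[0,1]^2`. -/
def unitSquare : Set E2 := {p | p 0 ∈ Set.Icc (0:ℝ) 1 ∧ p 1 ∈ Set.Icc (0:ℝ) 1}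

/-- Relative neighborhood graph adjacency: `i` and `j` are adjacent iff no third point
`k` satisfies `max(|X i − X k|, |X j − X k|) < |X i − X j|`, i.e. the lune of `X i` and
`X j` contains no point of the set. -/
def rngAdj {n : ℕ} (X : Fin n → E2) (i j : Fin n) : Prop :=
  i ≠ j ∧ ∀ k : Fin n, k ≠ i → k ≠ j →
    dist (X i) (X j) ≤ max (dist (X i) (X k)) (dist (X j) (X k))

/-- Degree of vertex `i` in the relative neighborhood graph of the points `X`. -/
def rngDeg {n : ℕ} (X : Fin n → E2) (i : Fin n) : ℕ :=
  Nat.card {j : Fin n // rngAdj X i j}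

/-- Maximal degree of the relative neighborhood graph of the points `X`. -/
def rngMaxDeg {n : ℕ} (X : Fin n → E2) : ℕ :=
  Finset.univ.sup (rngDeg X)

/-- The uniform distribution on the unit square (which has area 1). -/
def unifSquare : Measure E2 := volume.restrict unitSquare

/-- `n` points drawn independently and uniformly from the unit square. -/
def Pn (n : ℕ) : Measure (Fin n → E2) := Measure.pi fun _ => unifSquare

/-! ### Auxiliary material -/

open Metric in
lemma unit_dist_gt {v w : E2} (hv : v ≠ 0) (hab : ‖v‖ < ‖w‖) (hcw : ‖w‖ ≤ ‖v - w‖) :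
    1 < dist (‖v‖⁻¹ • v) (‖w‖⁻¹ • w) := by
  have ha : (0:ℝ) < ‖v‖ := norm_pos_iff.2 hv
  have hb : (0:ℝ) < ‖w‖ := ha.trans hab
  have hsq : ‖v - w‖ ^ 2 = ‖v‖ ^ 2 - 2 * inner ℝ v w + ‖w‖ ^ 2 := norm_sub_sq_real v w
  have hinner : (inner ℝ v w : ℝ) < ‖v‖ * ‖w‖ / 2 := by nlinarith
  set u := ‖v‖⁻¹ • v with hu
  set u' := ‖w‖⁻¹ • w with hu'
  have hnu : ‖u‖ = 1 := by
    rw [hu, norm_smul, norm_inv, norm_norm]; field_simp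
  have hnu' : ‖u'‖ = 1 := by
    rw [hu', norm_smul, norm_inv, norm_norm]; field_simp
  have hiu : (inner ℝ u u' : ℝ) = ‖v‖⁻¹ * (‖w‖⁻¹ * inner ℝ v w) := by
    rw [hu, hu', real_inner_smul_left, real_inner_smul_right]
  have hsq2 : ‖u - u'‖ ^ 2 = ‖u‖ ^ 2 - 2 * inner ℝ u u' + ‖u'‖ ^ 2 := norm_sub_sq_real u u'
  have hlt : 1 < ‖u - u'‖ ^ 2 := by
    rw [hsq2, hnu, hnu', hiu]
    have h1 : ‖v‖⁻¹ * (‖w‖⁻¹ * (inner ℝ v w : ℝ)) < ‖v‖⁻¹ * (‖w‖⁻¹ * (‖v‖ * ‖w‖ / 2)) := by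
      apply mul_lt_mul_of_pos_left _ (by positivity)
      exact mul_lt_mul_of_pos_left hinner (by positivity)
    have h2 : ‖v‖⁻¹ * (‖w‖⁻¹ * (‖v‖ * ‖w‖ / 2)) = 1/2 := by field_simp
    nlinarith
  rw [dist_eq_norm]
  nlinarith [norm_nonneg (u - u')]

open Metric in
lemma packing (s : Finset E2) (h1 : ∀ u ∈ s, ‖u‖ = 1)
    (h2 : ∀ u ∈ s, ∀ v ∈ s, u ≠ v → 1 < dist u v) : s.card ≤ 9 := by
  have hdisj : (s : Set E2).PairwiseDisjoint (fun u => ball u (1/2 : ℝ)) := by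
    intro u hu v hv huv
    exact ball_disjoint_ball (by linarith [(h2 u hu v hv huv)])
  have hmeas : volume (⋃ u ∈ s, ball u (1/2 : ℝ)) = ∑ u ∈ s, volume (ball u (1/2 : ℝ)) :=
    measure_biUnion_finset hdisj (fun u _ => measurableSet_ball)
  have hsub : (⋃ u ∈ s, ball u (1/2 : ℝ)) ⊆ ball (0 : E2) (3/2 : ℝ) := by
    intro x hx
    simp only [Set.mem_iUnion] at hx
    obtain ⟨u, hu, hxu⟩ := hx
    have : dist x (0 : E2) ≤ dist x u + dist u 0 := dist_triangle _ _ _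
    have hdu : dist u (0 : E2) = 1 := by rw [dist_zero_right]; exact h1 u hu
    exact mem_ball.2 (by rw [mem_ball] at hxu; linarith)
  have hfr : Module.finrank ℝ E2 = 2 := finrank_euclideanSpace_fin
  set V := volume (ball (0 : E2) 1) with hV
  have hball : ∀ u : E2, volume (ball u (1/2 : ℝ)) = ENNReal.ofReal ((1/2 : ℝ)^2) * V := by
    intro u
    rw [hV, Measure.addHaar_ball volume u (by norm_num : (0:ℝ) ≤ 1/2), hfr]
  have hball3 : volume (ball (0 : E2) (3/2 : ℝ)) = ENNReal.ofReal ((3/2 : ℝ)^2) * V := by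
    rw [hV, Measure.addHaar_ball volume _ (by norm_num : (0:ℝ) ≤ 3/2), hfr]
  have hle : ((s.card : ℝ≥0∞) * ENNReal.ofReal ((1/2 : ℝ)^2)) * V
      ≤ ENNReal.ofReal ((3/2 : ℝ)^2) * V := by
    rw [mul_assoc]
    calc (s.card : ℝ≥0∞) * (ENNReal.ofReal ((1/2 : ℝ)^2) * V)
        = ∑ u ∈ s, volume (ball u (1/2 : ℝ)) := by
          rw [Finset.sum_congr rfl (fun u _ => hball u), Finset.sum_const, nsmul_eq_mul]
      _ = volume (⋃ u ∈ s, ball u (1/2 : ℝ)) := hmeas.symm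
      _ ≤ volume (ball (0 : E2) (3/2 : ℝ)) := measure_mono hsub
      _ = _ := hball3
  have hV0 : V ≠ 0 := (measure_ball_pos volume _ (by norm_num)).ne'
  have hVt : V ≠ ⊤ := measure_ball_lt_top.ne
  have hle2 : (s.card : ℝ≥0∞) * ENNReal.ofReal ((1/2 : ℝ)^2) ≤ ENNReal.ofReal ((3/2 : ℝ)^2) :=
    (ENNReal.mul_le_mul_iff_left hV0 hVt).mp hle
  by_contra hcard
  push_neg at hcard
  have h10 : (10 : ℝ≥0∞) * ENNReal.ofReal ((1/2 : ℝ)^2) ≤ ENNReal.ofReal ((3/2 : ℝ)^2) := by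
    refine le_trans (mul_le_mul_left ?_ _) hle2
    exact_mod_cast hcard
  rw [show ((10 : ℝ≥0∞)) = ENNReal.ofReal (10:ℝ) by simp,
    ← ENNReal.ofReal_mul (by norm_num)] at h10
  have := (ENNReal.ofReal_le_ofReal_iff (by norm_num)).mp h10
  norm_num at this

/-- A configuration of points is "good" if all points are distinct and the distances
from any point to two other (distinct) points are distinct. This holds almost surely. -/
def goodPts {n : ℕ} (X : Fin n → E2) : Prop :=
  (∀ i j : Fin n, i ≠ j → X i ≠ X j) ∧
  ∀ i j k : Fin n, j ≠ i → k ≠ i → j ≠ k → dist (X i) (X j) ≠ dist (X i) (X k)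

lemma rngDeg_le_nine {n : ℕ} {X : Fin n → E2} (hX : goodPts X) (i : Fin n) :
    rngDeg X i ≤ 9 := by
  classical
  set u : Fin n → E2 := fun j => ‖X j - X i‖⁻¹ • (X j - X i) with hu
  set N : Finset (Fin n) := Finset.univ.filter (fun j => rngAdj X i j) with hN
  have hmemN : ∀ j, j ∈ N ↔ rngAdj X i j := by
    intro j; simp [hN]
  have hne : ∀ j ∈ N, X j - X i ≠ 0 := by
    intro j hj
    have hij := ((hmemN j).1 hj).1
    exact sub_ne_zero.2 (hX.1 j i (Ne.symm hij))
  have hnorm : ∀ j ∈ N, ‖u j‖ = 1 := by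
    intro j hj
    rw [hu]
    simp only [norm_smul, norm_inv, norm_norm]
    field_simp [norm_ne_zero_iff.2 (hne j hj)]
  have hdist : ∀ j ∈ N, ∀ k ∈ N, j ≠ k → 1 < dist (u j) (u k) := by
    intro j hj k hk hjk
    obtain ⟨hij, hadjj⟩ := (hmemN j).1 hj
    obtain ⟨hik, hadjk⟩ := (hmemN k).1 hk
    have hdne : dist (X i) (X j) ≠ dist (X i) (X k) :=
      hX.2 i j k (Ne.symm hij) (Ne.symm hik) hjk
    have hnj : ‖X j - X i‖ = dist (X i) (X j) := by rw [dist_comm, dist_eq_norm]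
    have hnk : ‖X k - X i‖ = dist (X i) (X k) := by rw [dist_comm, dist_eq_norm]
    have hsub : (X j - X i) - (X k - X i) = X j - X k := by abel
    rcases lt_or_gt_of_ne hdne with h | h
    · -- dist i j < dist i k; use adjacency of k with witness j
      have hb := hadjk j (Ne.symm hij) hjk
      rw [max_def] at hb
      have hbc : dist (X i) (X k) ≤ dist (X k) (X j) := by
        by_cases hcase : dist (X i) (X j) ≤ dist (X k) (X j)
        · simp [hcase] at hb; exact hb
        · simp [hcase] at hb; linarith
      have := unit_dist_gt (v := X j - X i) (w := X k - X i) (hne j hj)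
        (by rw [hnj, hnk]; exact h)
        (by rw [hnk, hsub, show X j - X k = -(X k - X j) by abel, norm_neg,
              ← dist_eq_norm]; exact hbc)
      simpa [hu] using this
    · have hb := hadjj k (Ne.symm hik) (Ne.symm hjk)
      have hbc : dist (X i) (X j) ≤ dist (X j) (X k) := by
        rcases le_max_iff.1 hb with h' | h'
        · linarith
        · exact h'
      have hsub' : (X k - X i) - (X j - X i) = X k - X j := by abel
      have := unit_dist_gt (v := X k - X i) (w := X j - X i) (hne k hk)
        (by rw [hnj, hnk]; exact h)
        (by rw [hnj, hsub', show X k - X j = -(X j - X k) by abel, norm_neg,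
              ← dist_eq_norm]; exact hbc)
      rw [dist_comm]
      simpa [hu] using this
  have hinj : Set.InjOn u N := by
    intro j hj k hk hjk
    by_contra hne'
    have := hdist j hj k hk hne'
    rw [hjk] at this
    simp only [dist_self] at this
    linarith
  have hcard : rngDeg X i = N.card := by
    rw [rngDeg, Nat.card_eq_fintype_card, Fintype.card_subtype]
  rw [hcard, ← Finset.card_image_of_injOn hinj]
  apply packing
  · intro x hx
    obtain ⟨j, hj, rfl⟩ := Finset.mem_image.1 hx
    exact hnorm j hj
  · intro x hx y hy hxy
    obtain ⟨j, hj, rfl⟩ := Finset.mem_image.1 hx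
    obtain ⟨k, hk, rfl⟩ := Finset.mem_image.1 hy
    exact hdist j hj k hk (fun h => hxy (by rw [h]))

instance : SigmaFinite unifSquare := by
  unfold unifSquare; infer_instance

lemma unifSquare_le_volume (t : Set E2) : unifSquare t ≤ volume t :=
  Measure.restrict_apply_le _ t

lemma pi_slice_null {n : ℕ} (k : Fin n) (s : Set (Fin n → E2)) (hs : MeasurableSet s)
    (h : ∀ X : Fin n → E2, unifSquare {z : E2 | Function.update X k z ∈ s} = 0) :
    Pn n s = 0 := by
  classical
  set p : Fin n → Prop := fun i => i ≠ k with hp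
  letI : Unique {i : Fin n // ¬ p i} :=
    ⟨⟨⟨k, by simp [hp]⟩⟩, fun a => Subtype.ext (not_not.mp a.2)⟩
  set e := MeasurableEquiv.piEquivPiSubtypeProd (fun _ : Fin n => E2) p with he
  have hmp := measurePreserving_piEquivPiSubtypeProd (fun _ : Fin n => unifSquare) p
  set ν := (Measure.pi fun _ : Subtype p => unifSquare).prod
      (Measure.pi fun _ : {i // ¬ p i} => unifSquare) with hν
  have ht : MeasurableSet (e.symm ⁻¹' s) := e.symm.measurable hs
  have key : Pn n s = ν (e.symm ⁻¹' s) := by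
    have := hmp.measure_preimage (μa := Pn n) (μb := ν) ht.nullMeasurableSet
    rw [← this, ← Set.preimage_comp, show ⇑e.symm ∘ ⇑e = id from funext e.symm_apply_apply,
      Set.preimage_id]
  rw [key, Measure.measure_prod_null ht]
  refine Filter.Eventually.of_forall (fun x => ?_)
  simp only [Pi.zero_apply]
  -- x : {i // p i} → E2 ; section in the k coordinate
  set X : Fin n → E2 := fun i => if hi : p i then x ⟨i, hi⟩ else 0 with hX
  have hsec : (Prod.mk x ⁻¹' (e.symm ⁻¹' s)) =
      (MeasurableEquiv.funUnique {i : Fin n // ¬ p i} E2) ⁻¹'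
        {z : E2 | Function.update X k z ∈ s} := by
    ext g
    simp only [Set.mem_preimage, Set.mem_setOf_eq]
    have : e.symm (x, g) = Function.update X k (g default) := by
      funext i
      by_cases hi : p i
      · have hik : i ≠ k := hi
        simp only [he, MeasurableEquiv.piEquivPiSubtypeProd,
          MeasurableEquiv.symm_mk, MeasurableEquiv.coe_mk, Equiv.symm_symm,
          Equiv.piEquivPiSubtypeProd_symm_apply, Function.update_of_ne hik, hX]
        rw [dif_pos hi, dif_pos hi]
      · have hik : i = k := not_not.mp hi
        subst hik
        have hdef : (⟨i, hi⟩ : {j // ¬ p j}) = default := Subsingleton.elim _ _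
        simp only [he, MeasurableEquiv.piEquivPiSubtypeProd,
          MeasurableEquiv.symm_mk, MeasurableEquiv.coe_mk, Equiv.symm_symm,
          Equiv.piEquivPiSubtypeProd_symm_apply, Function.update_self]
        rw [dif_neg hi, hdef]
    rw [this]
    rfl
  rw [hsec]
  have hms : MeasurableSet {z : E2 | Function.update X k z ∈ s} :=
    (measurable_update X (a := k)) hs
  have hmp2 := measurePreserving_funUnique (β := E2) unifSquare {i : Fin n // ¬ p i}
  have := (hmp2.measure_preimage hms.nullMeasurableSet).trans (h X)
  convert this using 3

lemma bad_null (n : ℕ) : Pn n {X : Fin n → E2 | ¬ goodPts X} = 0 := by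
  classical
  have hsub : {X : Fin n → E2 | ¬ goodPts X} ⊆
      (⋃ (i : Fin n) (j : Fin n), {X : Fin n → E2 | i ≠ j ∧ X i = X j}) ∪
      (⋃ (i : Fin n) (j : Fin n) (k : Fin n),
        {X : Fin n → E2 | j ≠ i ∧ k ≠ i ∧ j ≠ k ∧
          dist (X i) (X j) = dist (X i) (X k)}) := by
    intro X hx
    rw [Set.mem_setOf_eq, goodPts, not_and_or] at hx
    rcases hx with hx | hx
    · left; push_neg at hx; obtain ⟨i, j, hij, hXij⟩ := hx
      exact Set.mem_iUnion.2 ⟨i, Set.mem_iUnion.2 ⟨j, ⟨hij, hXij⟩⟩⟩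
    · right; push_neg at hx; obtain ⟨i, j, k, h1, h2, h3, h4⟩ := hx
      exact Set.mem_iUnion.2 ⟨i, Set.mem_iUnion.2 ⟨j, Set.mem_iUnion.2 ⟨k, ⟨h1, h2, h3, h4⟩⟩⟩⟩
  refine measure_mono_null hsub (measure_union_null ?_ ?_)
  · refine measure_iUnion_null fun i => measure_iUnion_null fun j => ?_
    by_cases hij : i = j
    · have : {X : Fin n → E2 | i ≠ j ∧ X i = X j} = ∅ := by
        ext X; simp [hij]
      rw [this]; exact measure_empty
    · have hset : {X : Fin n → E2 | i ≠ j ∧ X i = X j} = {X : Fin n → E2 | X i = X j} := by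
        ext X; simp [hij]
      rw [hset]
      refine pi_slice_null j _ (measurableSet_eq_fun (measurable_pi_apply i)
        (measurable_pi_apply j)) (fun X => ?_)
      have : {z : E2 | Function.update X j z ∈ {X : Fin n → E2 | X i = X j}} = {X i} := by
        ext z
        simp only [Set.mem_setOf_eq, Set.mem_singleton_iff,
          Function.update_of_ne hij, Function.update_self]
        exact eq_comm
      rw [this]
      exact le_antisymm ((unifSquare_le_volume _).trans_eq (measure_singleton _)) zero_le
  · refine measure_iUnion_null fun i => measure_iUnion_null fun j =>
      measure_iUnion_null fun k => ?_
    by_cases hcond : j ≠ i ∧ k ≠ i ∧ j ≠ k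
    · obtain ⟨hji, hki, hjk⟩ := hcond
      have hset : {X : Fin n → E2 | j ≠ i ∧ k ≠ i ∧ j ≠ k ∧
          dist (X i) (X j) = dist (X i) (X k)} =
          {X : Fin n → E2 | dist (X i) (X j) = dist (X i) (X k)} := by
        ext X; simp [hji, hki, hjk]
      rw [hset]
      refine pi_slice_null k _ (measurableSet_eq_fun
        ((measurable_pi_apply i).dist (measurable_pi_apply j))
        ((measurable_pi_apply i).dist (measurable_pi_apply k))) (fun X => ?_)
      have hik : i ≠ k := fun h => hki h.symm
      have : {z : E2 | Function.update X k z ∈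
          {X : Fin n → E2 | dist (X i) (X j) = dist (X i) (X k)}} =
          Metric.sphere (X i) (dist (X i) (X j)) := by
        ext z
        simp only [Set.mem_setOf_eq, Metric.mem_sphere,
          Function.update_of_ne hik, Function.update_of_ne hjk, Function.update_self]
        rw [dist_comm z (X i)]
        exact eq_comm
      rw [this]
      refine le_antisymm ((unifSquare_le_volume _).trans_eq ?_) zero_le
      exact Measure.addHaar_sphere volume _ _
    · have : {X : Fin n → E2 | j ≠ i ∧ k ≠ i ∧ j ≠ k ∧
          dist (X i) (X j) = dist (X i) (X k)} = ∅ := by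
        ext X
        simp only [Set.mem_setOf_eq, Set.mem_empty_iff_false, iff_false]
        intro hX
        exact hcond ⟨hX.1, hX.2.1, hX.2.2.1⟩
      rw [this]; exact measure_empty

/-- For every `c > 1`, the probability that the maximal degree of the
relative neighborhood graph of `n` i.i.d. uniform points in `[0,1]^2` exceeds
`c log n / log log n` tends to `0`; in particular the maximal degree is
`O(log n / log log n)` in probability. -/
theorem rng_maxDegree_upper_bound (c : ℝ) (hc : 1 < c) :
    Tendsto
      (fun n : ℕ => Pn n {X : Fin n → E2 |
        c * Real.log n / Real.log (Real.log n) < (rngMaxDeg X : ℝ)})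
      atTop (nhds 0) := by
  have hlog : ∀ᶠ n : ℕ in atTop, (324:ℝ) ≤ Real.log n :=
    (Real.tendsto_log_atTop.comp tendsto_natCast_atTop_atTop).eventually_ge_atTop 324
  have hev : ∀ᶠ n : ℕ in atTop, (9:ℝ) ≤ c * Real.log n / Real.log (Real.log n) := by
    filter_upwards [hlog] with n hn
    set L := Real.log n with hL'
    have hL : (324:ℝ) ≤ L := hn
    have hsq : (18:ℝ) ≤ Real.sqrt L := by
      rw [show (18:ℝ) = Real.sqrt 324 by
        rw [show (324:ℝ) = 18^2 by norm_num, Real.sqrt_sq (by norm_num)]]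
      exact Real.sqrt_le_sqrt hL
    have hlogL : Real.log L ≤ 2 * Real.sqrt L := by
      have h1 : Real.log (Real.sqrt L) = Real.log L / 2 := Real.log_sqrt (by linarith)
      have h2 : Real.log (Real.sqrt L) ≤ Real.sqrt L - 1 :=
        Real.log_le_sub_one_of_pos (by linarith)
      linarith
    have hsqL : Real.sqrt L * Real.sqrt L = L := Real.mul_self_sqrt (by linarith)
    have h9 : 9 * Real.log L ≤ L := by nlinarith
    have hpos : 0 < Real.log L := Real.log_pos (by linarith)
    rw [le_div_iff₀ hpos]
    nlinarith
  have hzero : ∀ᶠ n : ℕ in atTop, Pn n {X : Fin n → E2 |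
      c * Real.log n / Real.log (Real.log n) < (rngMaxDeg X : ℝ)} = 0 := by
    filter_upwards [hev] with n hn
    refine measure_mono_null ?_ (bad_null n)
    intro X hX
    simp only [Set.mem_setOf_eq] at hX ⊢
    intro hgood
    have h1 : rngMaxDeg X ≤ 9 := Finset.sup_le (fun i _ => rngDeg_le_nine hgood i)
    have h2 : (rngMaxDeg X : ℝ) ≤ 9 := by exact_mod_cast h1
    linarith
  exact Tendsto.congr' (hzero.mono fun n hn => hn.symm) tendsto_const_nhds
end
end

section
/- For the Gabriel graph of n points drawn independently and uniformly at random from [0,1]^2, lim_{n→∞} Pr{ some edge of the Gabriel graph has Euclidean length greater than 3·√(log n / n) } = 0. -/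
open MeasureTheory Filter
open scoped ENNReal

noncomputable section

/-- Gabriel adjacency: `i` and `j` are adjacent iff no third point lies in the open
disk whose diameter is the segment from `X i` to `X j`. -/
def gabrielAdj {n : ℕ} (X : Fin n → E2) (i j : Fin n) : Prop :=
  i ≠ j ∧ ∀ k : Fin n, k ≠ i → k ≠ j →
    dist (X i) (X j) / 2 ≤ dist (X k) (midpoint ℝ (X i) (X j))

/-- Degree of vertex `i` in the Gabriel graph of the points `X`. -/
def gabrielDeg {n : ℕ} (X : Fin n → E2) (i : Fin n) : ℕ :=
  Nat.card {j : Fin n // gabrielAdj X i j}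

/-- Maximal degree of the Gabriel graph of the points `X`. -/
def gabrielMaxDeg {n : ℕ} (X : Fin n → E2) : ℕ :=
  Finset.univ.sup (gabrielDeg X)

/-! ### Geometry -/

lemma measurableSet_unitSquare : MeasurableSet unitSquare := by
  have h0 : Measurable fun p : E2 => p 0 := (measurable_pi_apply 0).comp (WithLp.measurable_ofLp 2 (Fin 2 → ℝ))
  have h1 : Measurable fun p : E2 => p 1 := (measurable_pi_apply 1).comp (WithLp.measurable_ofLp 2 (Fin 2 → ℝ))
  exact (h0 measurableSet_Icc).inter (h1 measurableSet_Icc)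

lemma unitSquare_eq_preimage : unitSquare =
    (MeasurableEquiv.toLp 2 (Fin 2 → ℝ)).symm ⁻¹' (Set.pi Set.univ fun _ => Set.Icc (0:ℝ) 1) := by
  ext p
  simp only [unitSquare, Set.mem_preimage, Set.mem_pi, Set.mem_univ, forall_true_left,
    Set.mem_setOf_eq, Fin.forall_fin_two]
  rfl

lemma volume_unitSquare : volume unitSquare = 1 := by
  rw [unitSquare_eq_preimage,
    (EuclideanSpace.volume_preserving_symm_measurableEquiv_toLp (Fin 2)).measure_preimage
      (MeasurableSet.univ_pi (fun _ => measurableSet_Icc)).nullMeasurableSet,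
    volume_pi_pi]
  simp

def cell (N i j : ℕ) : Set E2 :=
  {p | p 0 ∈ Set.Icc ((i:ℝ)/N) ((i+1)/N) ∧ p 1 ∈ Set.Icc ((j:ℝ)/N) ((j+1)/N)}

lemma measurableSet_cell (N i j : ℕ) : MeasurableSet (cell N i j) := by
  have h0 : Measurable fun p : E2 => p 0 := (measurable_pi_apply 0).comp (WithLp.measurable_ofLp 2 (Fin 2 → ℝ))
  have h1 : Measurable fun p : E2 => p 1 := (measurable_pi_apply 1).comp (WithLp.measurable_ofLp 2 (Fin 2 → ℝ))
  exact (h0 measurableSet_Icc).inter (h1 measurableSet_Icc)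

lemma cell_subset_unitSquare {N i j : ℕ} (hi : i < N) (hj : j < N) :
    cell N i j ⊆ unitSquare := by
  have hN : (0:ℝ) < N := by exact_mod_cast hi.trans_le' (Nat.zero_le i)
  rintro p ⟨⟨h0l, h0r⟩, ⟨h1l, h1r⟩⟩
  refine ⟨⟨le_trans (by positivity) h0l, le_trans h0r ?_⟩,
    ⟨le_trans (by positivity) h1l, le_trans h1r ?_⟩⟩
  · rw [div_le_one hN]; exact_mod_cast Nat.succ_le_of_lt hi
  · rw [div_le_one hN]; exact_mod_cast Nat.succ_le_of_lt hj

lemma cell_eq_preimage (N i j : ℕ) : cell N i j =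
    (MeasurableEquiv.toLp 2 (Fin 2 → ℝ)).symm ⁻¹'
      (Set.pi Set.univ fun k : Fin 2 =>
        if k = 0 then Set.Icc ((i:ℝ)/N) ((i+1)/N) else Set.Icc ((j:ℝ)/N) ((j+1)/N)) := by
  ext p
  simp only [cell, Set.mem_preimage, Set.mem_pi, Set.mem_univ, forall_true_left,
    Set.mem_setOf_eq, Fin.forall_fin_two]
  norm_num

lemma volume_cell {N : ℕ} (hN : 0 < N) (i j : ℕ) :
    volume (cell N i j) = ENNReal.ofReal (((1:ℝ)/N) ^ 2) := by
  rw [cell_eq_preimage,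
    (EuclideanSpace.volume_preserving_symm_measurableEquiv_toLp (Fin 2)).measure_preimage
      (MeasurableSet.univ_pi (fun k => by split <;> exact measurableSet_Icc)).nullMeasurableSet,
    volume_pi_pi]
  have h1 : ((i:ℝ)+1)/N - i/N = 1/N := by field_simp; ring
  have h2 : ((j:ℝ)+1)/N - j/N = 1/N := by field_simp; ring
  have hpos : (0:ℝ) ≤ 1/N := by positivity
  rw [Fin.prod_univ_two]
  norm_num [Real.volume_Icc, h1, h2, sq]

lemma exists_cell_coord {N : ℕ} (hN : 0 < N) {x : ℝ} (hx : x ∈ Set.Icc (0:ℝ) 1) :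
    ∃ i : ℕ, i < N ∧ (i:ℝ)/N ≤ x ∧ x ≤ ((i:ℝ)+1)/N := by
  have hNR : (0:ℝ) < N := by exact_mod_cast hN
  obtain ⟨hx0, hx1⟩ := hx
  rcases le_or_gt (⌊x * N⌋₊) (N - 1) with h | h
  · refine ⟨⌊x * N⌋₊, by omega, ?_, ?_⟩
    · rw [div_le_iff₀ hNR]; exact Nat.floor_le (by positivity)
    · rw [le_div_iff₀ hNR]
      have := Nat.lt_floor_add_one (x * N)
      push_cast at this ⊢
      linarith
  · refine ⟨N - 1, by omega, ?_, ?_⟩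
    · rw [div_le_iff₀ hNR]
      have h' : ((N - 1 : ℕ) : ℝ) ≤ (⌊x * N⌋₊ : ℝ) := by exact_mod_cast h.le
      exact h'.trans (Nat.floor_le (by positivity))
    · rw [le_div_iff₀ hNR]
      have : ((N-1:ℕ):ℝ) + 1 = N := by
        have : (1:ℕ) ≤ N := hN
        push_cast [Nat.cast_sub this]
        ring
      rw [this]
      nlinarith

lemma exists_cell_mem {N : ℕ} (hN : 0 < N) {m : E2} (hm : m ∈ unitSquare) :
    ∃ i j : ℕ, i < N ∧ j < N ∧ m ∈ cell N i j := by
  obtain ⟨i, hi, hi1, hi2⟩ := exists_cell_coord hN hm.1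
  obtain ⟨j, hj, hj1, hj2⟩ := exists_cell_coord hN hm.2
  exact ⟨i, j, hi, hj, ⟨⟨hi1, hi2⟩, ⟨hj1, hj2⟩⟩⟩

lemma coord_bound {N k : ℕ} {a b : ℝ} (hN : (0:ℝ) < N)
    (ha : a ∈ Set.Icc ((k:ℝ)/N) ((k+1)/N)) (hb : b ∈ Set.Icc ((k:ℝ)/N) ((k+1)/N)) :
    dist a b ≤ 1 / N := by
  have e : ((k:ℝ)+1)/N - k/N = 1/N := by field_simp; ring
  rw [Real.dist_eq, abs_le]
  obtain ⟨a1, a2⟩ := ha; obtain ⟨b1, b2⟩ := hb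
  constructor <;> linarith

lemma dist_le_of_mem_cell {N i j : ℕ} (hN : 0 < N) {p q : E2}
    (hp : p ∈ cell N i j) (hq : q ∈ cell N i j) : dist p q ≤ Real.sqrt 2 / N := by
  have hNR : (0:ℝ) < N := by exact_mod_cast hN
  have hd : dist p q = Real.sqrt (dist (p 0) (q 0) ^ 2 + dist (p 1) (q 1) ^ 2) := by
    rw [EuclideanSpace.dist_eq, Fin.sum_univ_two]
  have h0 := coord_bound hNR hp.1 hq.1
  have h1 := coord_bound hNR hp.2 hq.2
  have d0 : (0:ℝ) ≤ dist (p 0) (q 0) := dist_nonneg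
  have d1 : (0:ℝ) ≤ dist (p 1) (q 1) := dist_nonneg
  rw [hd]
  have key : dist (p 0) (q 0) ^ 2 + dist (p 1) (q 1) ^ 2 ≤ 2 * (1 / N)^2 := by nlinarith
  calc Real.sqrt (dist (p 0) (q 0) ^ 2 + dist (p 1) (q 1) ^ 2)
      ≤ Real.sqrt (2 * (1/N) ^ 2) := Real.sqrt_le_sqrt key
    _ = Real.sqrt 2 / N := by
        rw [Real.sqrt_mul (by norm_num), Real.sqrt_sq (by positivity)]
        ring

lemma midpoint_coord (u v : E2) (k : Fin 2) : midpoint ℝ u v k = (u k + v k) / 2 := by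
  simp [midpoint_eq_smul_add]
  ring

lemma midpoint_mem_unitSquare {u v : E2} (hu : u ∈ unitSquare) (hv : v ∈ unitSquare) :
    midpoint ℝ u v ∈ unitSquare := by
  obtain ⟨⟨a1, a2⟩, b1, b2⟩ := hu
  obtain ⟨⟨c1, c2⟩, d1, d2⟩ := hv
  refine ⟨⟨?_, ?_⟩, ⟨?_, ?_⟩⟩ <;> rw [midpoint_coord] <;> linarith

/-- The key geometric inclusion: if all points lie in the square and some Gabriel edge is
longer than `r = 3√(log n / n)`, then some grid cell is completely free of points. -/
lemma inclusion {n N : ℕ} (hN : 0 < N)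
    (hcond : Real.sqrt 2 / N ≤ 3 * Real.sqrt (Real.log n / n) / 2)
    {X : Fin n → E2} (hX : ∀ k, X k ∈ unitSquare)
    {i j : Fin n} (hadj : gabrielAdj X i j)
    (hlen : 3 * Real.sqrt (Real.log n / n) < dist (X i) (X j)) :
    ∃ a b : ℕ, a < N ∧ b < N ∧ ∀ k, X k ∉ cell N a b := by
  set m := midpoint ℝ (X i) (X j) with hm
  have hmem : m ∈ unitSquare := midpoint_mem_unitSquare (hX i) (hX j)
  obtain ⟨a, b, ha, hb, hmc⟩ := exists_cell_mem hN hmem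
  refine ⟨a, b, ha, hb, fun k hk => ?_⟩
  have hdk : dist (X k) m ≤ Real.sqrt 2 / N := dist_le_of_mem_cell hN hk hmc
  have hlt : dist (X k) m < dist (X i) (X j) / 2 :=
    lt_of_le_of_lt (hdk.trans hcond) (by linarith)
  rcases eq_or_ne k i with rfl | hki
  · rw [hm, dist_left_midpoint] at hlt
    norm_num at hlt
    linarith
  rcases eq_or_ne k j with rfl | hkj
  · rw [hm, dist_right_midpoint] at hlt
    norm_num at hlt
    linarith
  · exact absurd (hadj.2 k hki hkj) (not_le.mpr hlt)

/-! ### Measure computations -/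

instance : IsProbabilityMeasure unifSquare :=
  ⟨by rw [unifSquare, Measure.restrict_apply_univ, volume_unitSquare]⟩

instance (n : ℕ) : IsProbabilityMeasure (Pn n) :=
  MeasureTheory.Measure.pi.instIsProbabilityMeasure _

lemma unifSquare_cell_compl {N i j : ℕ} (hi : i < N) (hj : j < N) :
    unifSquare (cell N i j)ᶜ = ENNReal.ofReal (1 - ((1:ℝ)/N)^2) := by
  have hN : 0 < N := by omega
  have hc : unifSquare (cell N i j) = ENNReal.ofReal (((1:ℝ)/N)^2) := by
    rw [unifSquare, Measure.restrict_apply (measurableSet_cell N i j),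
      Set.inter_eq_self_of_subset_left (cell_subset_unitSquare hi hj), volume_cell hN]
  have := measure_compl (μ := unifSquare) (measurableSet_cell N i j) (measure_ne_top _ _)
  rw [this, measure_univ, hc, ← ENNReal.ofReal_one,
    ← ENNReal.ofReal_sub _ (by positivity)]

lemma Pn_avoid {n N i j : ℕ} (hi : i < N) (hj : j < N) :
    Pn n (Set.pi Set.univ fun _ : Fin n => (cell N i j)ᶜ)
      = ENNReal.ofReal ((1 - ((1:ℝ)/N)^2)^n) := by
  have hN1 : (1:ℝ)/N ≤ 1 := by
    have hN : 0 < N := by omega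
    have : (1:ℝ) ≤ N := by exact_mod_cast hN
    rw [div_le_one (by linarith)]
    exact this
  have hnn : (0:ℝ) ≤ 1 - ((1:ℝ)/N)^2 := by nlinarith [show (0:ℝ) ≤ 1/N by positivity]
  rw [Pn, Measure.pi_pi, unifSquare_cell_compl hi hj, Finset.prod_const, Finset.card_univ,
    Fintype.card_fin, ← ENNReal.ofReal_pow hnn]

lemma main_bound {n N : ℕ} (hN : 0 < N)
    (hcond : Real.sqrt 2 / N ≤ 3 * Real.sqrt (Real.log n / n) / 2) :
    Pn n {X : Fin n → E2 | ∃ i j : Fin n, gabrielAdj X i j ∧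
        3 * Real.sqrt (Real.log n / n) < dist (X i) (X j)}
      ≤ ENNReal.ofReal ((N:ℝ)^2 * (1 - ((1:ℝ)/N)^2)^n) := by
  set ev := {X : Fin n → E2 | ∃ i j : Fin n, gabrielAdj X i j ∧
        3 * Real.sqrt (Real.log n / n) < dist (X i) (X j)}
  set G := Set.pi Set.univ fun _ : Fin n => unitSquare with hG
  have hGmeas : MeasurableSet G := MeasurableSet.univ_pi fun _ => measurableSet_unitSquare
  have hGfull : Pn n G = 1 := by
    rw [hG, Pn, Measure.pi_pi]
    have : unifSquare unitSquare = 1 := by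
      rw [unifSquare, Measure.restrict_apply measurableSet_unitSquare, Set.inter_self,
        volume_unitSquare]
    simp [this]
  have hGc : Pn n Gᶜ = 0 := by
    rw [measure_compl hGmeas (measure_ne_top _ _), measure_univ, hGfull, tsub_self]
  have hsub : ev ∩ G ⊆
      ⋃ a ∈ Finset.range N, ⋃ b ∈ Finset.range N,
        Set.pi Set.univ fun _ : Fin n => (cell N a b)ᶜ := by
    rintro X ⟨⟨i, j, hadj, hlen⟩, hXG⟩
    have hX : ∀ k, X k ∈ unitSquare := fun k => hXG k (Set.mem_univ k)
    obtain ⟨a, b, ha, hb, hav⟩ := inclusion hN hcond hX hadj hlen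
    simp only [Set.mem_iUnion, Finset.mem_range]
    exact ⟨a, ha, b, hb, fun k _ => hav k⟩
  calc Pn n ev ≤ Pn n ((ev ∩ G) ∪ Gᶜ) := by
        apply measure_mono
        intro X hX
        by_cases h : X ∈ G
        · exact Or.inl ⟨hX, h⟩
        · exact Or.inr h
    _ ≤ Pn n (ev ∩ G) + Pn n Gᶜ := measure_union_le _ _
    _ = Pn n (ev ∩ G) := by rw [hGc, add_zero]
    _ ≤ Pn n (⋃ a ∈ Finset.range N, ⋃ b ∈ Finset.range N,
          Set.pi Set.univ fun _ : Fin n => (cell N a b)ᶜ) := measure_mono hsub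
    _ ≤ ∑ a ∈ Finset.range N, Pn n (⋃ b ∈ Finset.range N,
          Set.pi Set.univ fun _ : Fin n => (cell N a b)ᶜ) :=
        measure_biUnion_finset_le _ _
    _ ≤ ∑ a ∈ Finset.range N, ∑ b ∈ Finset.range N,
          Pn n (Set.pi Set.univ fun _ : Fin n => (cell N a b)ᶜ) :=
        Finset.sum_le_sum fun a _ => measure_biUnion_finset_le _ _
    _ = ∑ a ∈ Finset.range N, ∑ b ∈ Finset.range N,
          ENNReal.ofReal ((1 - ((1:ℝ)/N)^2)^n) := by
        refine Finset.sum_congr rfl fun a ha => Finset.sum_congr rfl fun b hb => ?_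
        exact Pn_avoid (Finset.mem_range.mp ha) (Finset.mem_range.mp hb)
    _ = (N:ℝ≥0∞)^2 * ENNReal.ofReal ((1 - ((1:ℝ)/N)^2)^n) := by
        rw [Finset.sum_const, Finset.sum_const, Finset.card_range, nsmul_eq_mul, nsmul_eq_mul,
          ← mul_assoc, sq]
        ring_nf
    _ = ENNReal.ofReal ((N:ℝ)^2 * (1 - ((1:ℝ)/N)^2)^n) := by
        have hN1 : (1:ℝ)/N ≤ 1 := by
          have : (1:ℝ) ≤ N := by exact_mod_cast hN
          rw [div_le_one (by linarith)]; exact this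
        have hnn : (0:ℝ) ≤ (1 - ((1:ℝ)/N)^2)^n := by
          apply pow_nonneg; nlinarith [show (0:ℝ) ≤ 1/N by positivity]
        rw [ENNReal.ofReal_mul (by positivity)]
        congr 1
        rw [← ENNReal.ofReal_natCast N, ← ENNReal.ofReal_pow (by positivity)]

/-! ### Asymptotics -/

def Nf (n : ℕ) : ℕ := ⌈(24/25 : ℝ) * Real.sqrt (n / Real.log n)⌉₊

lemma eventually_log_le : ∀ᶠ n : ℕ in atTop, 2500 * Real.log n ≤ (n:ℝ) := by
  have h := Real.isLittleO_log_id_atTop.bound (c := 1/2500) (by norm_num)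
  have h2 := (tendsto_natCast_atTop_atTop (R := ℝ)).eventually h
  filter_upwards [h2, eventually_ge_atTop 1] with n hn h1
  have hn1 : (1:ℝ) ≤ (n:ℝ) := by exact_mod_cast h1
  have : ‖Real.log n‖ ≤ 1/2500 * ‖(n:ℝ)‖ := hn
  rw [Real.norm_eq_abs, Real.norm_eq_abs] at this
  have h4 := (le_abs_self (Real.log n)).trans this
  rw [abs_of_nonneg (show (0:ℝ) ≤ (n:ℝ) by positivity)] at h4
  linarith

lemma one_le_log {n : ℕ} (hn : 3 ≤ n) : 1 ≤ Real.log n := by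
  have h3 : (3:ℝ) ≤ (n:ℝ) := by exact_mod_cast hn
  have : Real.exp 1 ≤ 3 := by
    have := Real.exp_one_lt_d9
    linarith
  calc (1:ℝ) = Real.log (Real.exp 1) := (Real.log_exp 1).symm
    _ ≤ Real.log n := Real.log_le_log (Real.exp_pos 1) (this.trans h3)

set_option maxHeartbeats 1000000 in
lemma key_chain {n : ℕ} (h3 : 3 ≤ n) (hlog : 2500 * Real.log n ≤ (n:ℝ)) :
    0 < Nf n ∧
    Real.sqrt 2 / (Nf n) ≤ 3 * Real.sqrt (Real.log n / n) / 2 ∧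
    ((Nf n : ℝ)^2 * (1 - ((1:ℝ)/(Nf n))^2)^n ≤ Real.exp (-(Real.log n / 25))) := by
  set L := Real.log n with hL
  have hL1 : 1 ≤ L := one_le_log h3
  have hnpos : (0:ℝ) < n := by positivity
  have hLpos : (0:ℝ) < L := by linarith
  set S := Real.sqrt ((n:ℝ) / L) with hS
  have hSnonneg : 0 ≤ S := Real.sqrt_nonneg _
  have hS2 : S^2 = (n:ℝ)/L := Real.sq_sqrt (by positivity)
  have hS50 : 50 ≤ S := by
    have h2500 : (2500:ℝ) ≤ (n:ℝ)/L := by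
      rw [le_div_iff₀ hLpos]; linarith
    have : Real.sqrt 2500 = 50 := by
      rw [show (2500:ℝ) = 50^2 by norm_num, Real.sqrt_sq (by norm_num)]
    calc (50:ℝ) = Real.sqrt 2500 := this.symm
      _ ≤ S := Real.sqrt_le_sqrt h2500
  have hprod : Real.sqrt (L / n) * S = 1 := by
    rw [hS, ← Real.sqrt_mul (by positivity)]
    rw [show L / (n:ℝ) * ((n:ℝ)/L) = 1 by field_simp]
    exact Real.sqrt_one
  set N := Nf n with hN
  have hNlow : (24/25 : ℝ) * S ≤ (N:ℝ) := Nat.le_ceil _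
  have hNup : (N:ℝ) ≤ (24/25 : ℝ) * S + 1 := by
    have := Nat.ceil_lt_add_one (show (0:ℝ) ≤ (24/25 : ℝ) * S by positivity)
    exact this.le
  have hNposR : (0:ℝ) < N := lt_of_lt_of_le (by nlinarith) hNlow
  have hNpos : 0 < N := by exact_mod_cast hNposR
  clear_value N
  clear_value S
  clear_value L
  clear hN
  have hLn_nonneg : 0 ≤ Real.sqrt (L / n) := Real.sqrt_nonneg _
  have hsqrt2 : Real.sqrt 2 ≤ 1.44 := by
    rw [show (1.44:ℝ) = Real.sqrt (1.44^2) by rw [Real.sqrt_sq] <;> norm_num]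
    exact Real.sqrt_le_sqrt (by norm_num)
  refine ⟨hNpos, ?_, ?_⟩
  · -- √2/N ≤ (3/2)√(L/n)
    rw [div_le_iff₀ hNposR]
    calc Real.sqrt 2 ≤ 1.44 := hsqrt2
      _ = 3 * ((24/25 : ℝ) * (Real.sqrt (L/n) * S)) / 2 := by rw [hprod]; norm_num
      _ = 3 * Real.sqrt (L/n) * ((24/25:ℝ) * S) / 2 := by ring
      _ ≤ 3 * Real.sqrt (L/n) * (N:ℝ) / 2 := by
          have h3s : 0 ≤ 3 * Real.sqrt (L/n) := by positivity
          nlinarith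
      _ = 3 * Real.sqrt (L/n) / 2 * N := by ring
  · -- the numeric bound
    have hNle : (N:ℝ) ≤ (49/50) * S := by nlinarith
    have hLS : L * S^2 = n := by rw [hS2]; field_simp
    have hNS : (N:ℝ)^2 ≤ (2401/2500) * S^2 := by nlinarith
    have hN2 : L * (N:ℝ)^2 ≤ (2401/2500) * n := by
      nlinarith [mul_le_mul_of_nonneg_left hNS hLpos.le]
    have hN2n : (N:ℝ)^2 ≤ n := by nlinarith
    obtain ⟨x, hx⟩ : ∃ x : ℝ, ((1:ℝ)/(N:ℝ))^2 = x := ⟨_, rfl⟩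
    rw [hx]
    have hxpos : 0 < x := hx ▸ pow_pos (div_pos one_pos hNposR) 2
    have hx1 : x ≤ 1 := by
      rw [← hx]
      have h1 : (1:ℝ) ≤ (N:ℝ) := by exact_mod_cast hNpos
      have h2 : (0:ℝ) ≤ 1/(N:ℝ) := le_of_lt (div_pos one_pos hNposR)
      have h3 : (1:ℝ)/N ≤ 1 := by rw [div_le_one hNposR]; exact h1
      nlinarith
    have hone_sub : 0 ≤ 1 - x := by linarith
    have hexp1 : 1 - x ≤ Real.exp (-x) := by
      have := Real.add_one_le_exp (-x)
      linarith
    have hpow : (1 - x)^n ≤ Real.exp (-x)^n := pow_le_pow_left₀ hone_sub hexp1 n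
    have hexpn : Real.exp (-x)^n = Real.exp (-(x * n)) := by
      rw [← Real.exp_nat_mul]; ring_nf
    have hxn : (26/25) * L ≤ x * n := by
      have hN2pos : (0:ℝ) < (N:ℝ)^2 := pow_pos hNposR 2
      have hxeq : x * n * (N:ℝ)^2 = n := by
        rw [← hx]; field_simp
      rw [← mul_le_mul_iff_of_pos_right hN2pos, hxeq]
      linarith
    have hmono : Real.exp (-(x * n)) ≤ Real.exp (-((26/25) * L)) :=
      Real.exp_le_exp.mpr (by linarith)
    have hnexp : (n:ℝ) = Real.exp L := by rw [hL]; exact (Real.exp_log hnpos).symm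
    calc (N:ℝ)^2 * (1 - x)^n ≤ (n:ℝ) * Real.exp (-((26/25) * L)) := by
          have h1 : (1-x)^n ≤ Real.exp (-((26/25) * L)) := by
            rw [← hexpn] at hmono; exact hpow.trans hmono
          have h2 : (0:ℝ) ≤ (1-x)^n := pow_nonneg hone_sub n
          nlinarith [Real.exp_pos (-((26/25) * L))]
      _ = Real.exp (L - (26/25) * L) := by rw [hnexp, ← Real.exp_add]; ring_nf
      _ ≤ Real.exp (-(L / 25)) := Real.exp_le_exp.mpr (by linarith)

/-- The probability that some edge of the Gabriel graph of `n` i.i.d.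
uniform points in `[0,1]^2` has Euclidean length greater than `3√(log n / n)` tends
to `0`. -/
theorem gabriel_max_edge_length :
    Tendsto
      (fun n : ℕ => Pn n {X : Fin n → E2 |
        ∃ i j : Fin n, gabrielAdj X i j ∧
          3 * Real.sqrt (Real.log n / n) < dist (X i) (X j)})
      atTop (nhds 0) := by
  have hle : ∀ᶠ n : ℕ in atTop,
      Pn n {X : Fin n → E2 | ∃ i j : Fin n, gabrielAdj X i j ∧
          3 * Real.sqrt (Real.log n / n) < dist (X i) (X j)}
        ≤ ENNReal.ofReal (Real.exp (-(Real.log n / 25))) := by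
    filter_upwards [eventually_ge_atTop 3, eventually_log_le] with n h3 hlog
    obtain ⟨hNpos, hcond, hbound⟩ := key_chain h3 hlog
    exact (main_bound hNpos hcond).trans (ENNReal.ofReal_le_ofReal hbound)
  have hexp0 : Tendsto (fun n : ℕ => Real.exp (-(Real.log n / 25))) atTop (nhds 0) := by
    apply Real.tendsto_exp_atBot.comp
    have hlogtop : Tendsto (fun n : ℕ => Real.log n) atTop atTop :=
      Real.tendsto_log_atTop.comp tendsto_natCast_atTop_atTop
    have : Tendsto (fun n : ℕ => Real.log n / 25) atTop atTop :=
      hlogtop.atTop_div_const (by norm_num)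
    exact tendsto_neg_atBot_iff.mpr this
  have hofReal : Tendsto (fun n : ℕ => ENNReal.ofReal (Real.exp (-(Real.log n / 25))))
      atTop (nhds 0) := by
    have := (ENNReal.continuous_ofReal.tendsto 0).comp hexp0
    simpa [Function.comp_def] using this
  rw [ENNReal.tendsto_nhds_zero] at hofReal ⊢
  intro ε hε
  filter_upwards [hle, hofReal ε hε] with n h1 h2
  exact h1.trans h2
end
end

section
/- Let X_1,…,X_m be drawn independently and uniformly at random from an axis-parallel rectangle [a,b]×[c,d] of positive area, and let M be the number of maximal points among X_1,…,X_m. Then log m ≤ E[M] ≤ log m + 1 (natural logarithm). The same bounds hold when M is the number of minimal points. -/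
open MeasureTheory Real

noncomputable section

/-- `u` dominates `v` if both coordinates of `u` are strictly larger. -/
def Dominates (u v : ℝ × ℝ) : Prop := v.1 < u.1 ∧ v.2 < u.2

/-- The point `X i` is maximal: no point of the sequence dominates it. -/
def IsMaximal {m : ℕ} (X : Fin m → ℝ × ℝ) (i : Fin m) : Prop :=
  ∀ j : Fin m, ¬ Dominates (X j) (X i)

/-- The point `X i` is minimal: it dominates no point of the sequence. -/
def IsMinimal {m : ℕ} (X : Fin m → ℝ × ℝ) (i : Fin m) : Prop :=
  ∀ j : Fin m, ¬ Dominates (X i) (X j)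

/-- The number of maximal points among `X 0, …, X (m-1)`. -/
def numMaximal {m : ℕ} (X : Fin m → ℝ × ℝ) : ℕ :=
  Nat.card {i : Fin m // IsMaximal X i}

/-- The number of minimal points among `X 0, …, X (m-1)`. -/
def numMinimal {m : ℕ} (X : Fin m → ℝ × ℝ) : ℕ :=
  Nat.card {i : Fin m // IsMinimal X i}

/-- The uniform distribution on the axis-parallel rectangle `[a,b] × [c,d]`. -/
def unifRect (a b c d : ℝ) : Measure (ℝ × ℝ) :=
  (volume (Set.Icc a b ×ˢ Set.Icc c d))⁻¹ • volume.restrict (Set.Icc a b ×ˢ Set.Icc c d)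

/-- `m` points drawn independently and uniformly from the rectangle `[a,b] × [c,d]`. -/
def Pm (m : ℕ) (a b c d : ℝ) : Measure (Fin m → ℝ × ℝ) :=
  Measure.pi fun _ => unifRect a b c d

/-! ### Auxiliary one–dimensional integrals -/

lemma aux_L1 (n : ℕ) (t : ℝ) :
    ∫ s in (0:ℝ)..1, (1 - t*s)^n = (∑ k ∈ Finset.range (n+1), (1-t)^k) / (n+1) := by
  rcases eq_or_ne t 0 with rfl | ht
  · simp
    field_simp
  · have hF : ∀ s ∈ Set.uIcc (0:ℝ) 1, HasDerivAt
        (fun s => -(1 - t*s)^(n+1) / ((n+1)*t)) ((1 - t*s)^n) s := by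
      intro s _
      have h1 : HasDerivAt (fun s : ℝ => 1 - t*s) (-t) s := by
        simpa using ((hasDerivAt_id s).const_mul t).const_sub 1
      have h2 := (h1.pow (n+1))
      have h3 := h2.div_const ((n+1)*t)
      have h4 := h3.neg
      convert h4 using 1
      · rfl
      · rfl
      · funext y; simp only [Pi.neg_apply, Pi.pow_apply]; ring
      · rw [Nat.add_sub_cancel]; push_cast; field_simp
    have hInt : IntervalIntegrable (fun s => (1 - t*s)^n) volume 0 1 :=
      ((by continuity : Continuous fun s : ℝ => (1 - t*s)^n).intervalIntegrable 0 1)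
    rw [intervalIntegral.integral_eq_sub_of_hasDerivAt hF hInt]
    have hg := geom_sum_mul (1 - t) (n+1)
    have hm : ((n:ℝ)+1) ≠ 0 := by positivity
    field_simp
    linear_combination hg

lemma aux_L2 {c d : ℝ} (h : c < d) (f : ℝ → ℝ) :
    ∫ y in c..d, f ((d - y)/(d - c)) = (d - c) * ∫ s in (0:ℝ)..1, f s := by
  have hr : d - c ≠ 0 := sub_ne_zero.2 h.ne'
  have e1 : ∀ y : ℝ, (d - y)/(d - c) = (-(d-c)⁻¹) * y + d/(d-c) := by
    intro y; field_simp; ring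
  simp_rw [e1]
  rw [intervalIntegral.integral_comp_mul_add f (by simpa using inv_ne_zero hr) (d/(d-c))]
  have e2 : -(d-c)⁻¹ * c + d/(d-c) = 1 := by field_simp; ring
  have e3 : -(d-c)⁻¹ * d + d/(d-c) = 0 := by field_simp; ring
  rw [e2, e3, intervalIntegral.integral_symm, smul_eq_mul]
  field_simp

lemma aux_L2' {c d : ℝ} (h : c < d) (f : ℝ → ℝ) :
    ∫ y in c..d, f ((y - c)/(d - c)) = (d - c) * ∫ s in (0:ℝ)..1, f s := by
  have hr : d - c ≠ 0 := sub_ne_zero.2 h.ne'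
  have e1 : ∀ y : ℝ, (y - c)/(d - c) = (d-c)⁻¹ * y + (-c/(d-c)) := by
    intro y; field_simp; ring
  simp_rw [e1]
  rw [intervalIntegral.integral_comp_mul_add f (inv_ne_zero hr) (-c/(d-c))]
  have e2 : (d-c)⁻¹ * c + (-c/(d-c)) = 0 := by field_simp; ring
  have e3 : (d-c)⁻¹ * d + (-c/(d-c)) = 1 := by field_simp; ring
  rw [e2, e3, smul_eq_mul]
  field_simp

lemma aux_L3 (n : ℕ) : ∫ s in (0:ℝ)..1, (∑ k ∈ Finset.range (n+1), s^k)
    = ∑ k ∈ Finset.range (n+1), (1:ℝ)/(k+1) := by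
  rw [intervalIntegral.integral_finset_sum]
  · refine Finset.sum_congr rfl fun k _ => ?_
    rw [integral_pow]; simp
  · intro k _
    exact (continuous_pow k).intervalIntegrable 0 1

lemma aux_icc_int {c d : ℝ} (h : c < d) (f : ℝ → ℝ) :
    ∫ y in Set.Icc c d, f y = ∫ y in c..d, f y := by
  rw [MeasureTheory.integral_Icc_eq_integral_Ioc, intervalIntegral.integral_of_le h.le]

/-! ### Measurability lemmas -/

lemma measurable_dom {m : ℕ} (i j : Fin m) :
    MeasurableSet {X : Fin m → ℝ × ℝ | Dominates (X j) (X i)} := by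
  have : {X : Fin m → ℝ × ℝ | Dominates (X j) (X i)}
      = {X : Fin m → ℝ × ℝ | (X i).1 < (X j).1} ∩ {X | (X i).2 < (X j).2} := rfl
  rw [this]
  exact (measurableSet_lt (measurable_pi_apply i).fst (measurable_pi_apply j).fst).inter
    (measurableSet_lt (measurable_pi_apply i).snd (measurable_pi_apply j).snd)

lemma measurable_isMaximal {m : ℕ} (i : Fin m) :
    MeasurableSet {X : Fin m → ℝ × ℝ | IsMaximal X i} := by
  have : {X : Fin m → ℝ × ℝ | IsMaximal X i}
      = ⋂ j, {X : Fin m → ℝ × ℝ | Dominates (X j) (X i)}ᶜ := by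
    ext X; simp [IsMaximal, Set.mem_iInter]
  rw [this]
  exact MeasurableSet.iInter fun j => (measurable_dom i j).compl

lemma measurable_isMinimal {m : ℕ} (i : Fin m) :
    MeasurableSet {X : Fin m → ℝ × ℝ | IsMinimal X i} := by
  have : {X : Fin m → ℝ × ℝ | IsMinimal X i}
      = ⋂ j, {X : Fin m → ℝ × ℝ | Dominates (X i) (X j)}ᶜ := by
    ext X; simp [IsMinimal, Set.mem_iInter]
  rw [this]
  exact MeasurableSet.iInter fun j => (measurable_dom j i).compl

/-! ### Expectation as a sum of probabilities -/

lemma exp_sum {m : ℕ} (P : Measure (Fin m → ℝ × ℝ)) [IsProbabilityMeasure P]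
    (p : (Fin m → ℝ × ℝ) → Fin m → Prop) (hp : ∀ i, MeasurableSet {X | p X i}) :
    ∫ X, (Nat.card {i // p X i} : ℝ) ∂P = ∑ i, (P {X | p X i}).toReal := by
  classical
  have hfun : ∀ X, (Nat.card {i // p X i} : ℝ)
      = ∑ i : Fin m, Set.indicator {X | p X i} (fun _ => (1:ℝ)) X := by
    intro X
    rw [Nat.card_eq_fintype_card, Fintype.card_subtype, Finset.card_filter]
    push_cast
    refine Finset.sum_congr rfl fun i _ => ?_
    by_cases h : p X i <;> simp [Set.indicator_apply, h]
  rw [show (fun X => (Nat.card {i // p X i} : ℝ))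
      = fun X => ∑ i : Fin m, Set.indicator {X | p X i} (fun _ => (1:ℝ)) X from funext hfun]
  rw [MeasureTheory.integral_finset_sum]
  · refine Finset.sum_congr rfl fun i _ => ?_
    rw [MeasureTheory.integral_indicator_const (1:ℝ) (hp i)]
    simp
    rfl
  · intro i _
    exact (integrable_const (1:ℝ)).indicator (hp i)

section main
variable {a b c d : ℝ} (hab : a < b) (hcd : c < d)
include hab hcd

set_option linter.unusedSectionVars false

lemma vol_rect : volume (Set.Icc a b ×ˢ Set.Icc c d) = ENNReal.ofReal ((b-a)*(d-c)) := by
  rw [MeasureTheory.Measure.volume_eq_prod, MeasureTheory.Measure.prod_prod,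
    Real.volume_Icc, Real.volume_Icc, ← ENNReal.ofReal_mul (by linarith)]

lemma unifRect_prob : IsProbabilityMeasure (unifRect a b c d) := by
  constructor
  rw [unifRect, Measure.smul_apply, Measure.restrict_apply MeasurableSet.univ,
    Set.univ_inter, smul_eq_mul, ENNReal.inv_mul_cancel]
  · rw [vol_rect hab hcd]
    simp only [ne_eq, ENNReal.ofReal_eq_zero, not_le]
    nlinarith
  · rw [vol_rect hab hcd]; exact ENNReal.ofReal_ne_top

lemma slice_max (x : ℝ × ℝ) (hx : x ∈ Set.Icc a b ×ˢ Set.Icc c d) :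
    unifRect a b c d {y | Dominates y x}
      = ENNReal.ofReal (((b - x.1)/(b-a)) * ((d - x.2)/(d-c))) := by
  obtain ⟨⟨hx1, hx2⟩, hx3, hx4⟩ := hx
  have hset : {y : ℝ × ℝ | Dominates y x} = Set.Ioi x.1 ×ˢ Set.Ioi x.2 := by
    ext y; simp [Dominates, Set.mem_prod]
  have h1 : Set.Ioi x.1 ∩ Set.Icc a b = Set.Ioc x.1 b := by
    ext z; simp only [Set.mem_inter_iff, Set.mem_Ioi, Set.mem_Icc, Set.mem_Ioc]
    constructor
    · rintro ⟨h, _, h2⟩; exact ⟨h, h2⟩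
    · rintro ⟨h, h2⟩; exact ⟨h, by linarith, h2⟩
  have h2 : Set.Ioi x.2 ∩ Set.Icc c d = Set.Ioc x.2 d := by
    ext z; simp only [Set.mem_inter_iff, Set.mem_Ioi, Set.mem_Icc, Set.mem_Ioc]
    constructor
    · rintro ⟨h, _, h2⟩; exact ⟨h, h2⟩
    · rintro ⟨h, h2⟩; exact ⟨h, by linarith, h2⟩
  rw [unifRect, Measure.smul_apply, hset,
    Measure.restrict_apply (measurableSet_Ioi.prod measurableSet_Ioi),
    Set.prod_inter_prod, h1, h2, vol_rect hab hcd, MeasureTheory.Measure.volume_eq_prod,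
    MeasureTheory.Measure.prod_prod, Real.volume_Ioc, Real.volume_Ioc, smul_eq_mul,
    ← ENNReal.ofReal_mul (by linarith)]
  have key : ((b - x.1)/(b-a)) * ((d - x.2)/(d-c)) = ((b-x.1)*(d-x.2)) / ((b-a)*(d-c)) := by
    have h1 : b - a ≠ 0 := by linarith
    have h2 : d - c ≠ 0 := by linarith
    field_simp
  rw [key, ENNReal.ofReal_div_of_pos (by nlinarith), ENNReal.div_eq_inv_mul]

lemma slice_min (x : ℝ × ℝ) (hx : x ∈ Set.Icc a b ×ˢ Set.Icc c d) :
    unifRect a b c d {y | Dominates x y}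
      = ENNReal.ofReal (((x.1 - a)/(b-a)) * ((x.2 - c)/(d-c))) := by
  obtain ⟨⟨hx1, hx2⟩, hx3, hx4⟩ := hx
  have hset : {y : ℝ × ℝ | Dominates x y} = Set.Iio x.1 ×ˢ Set.Iio x.2 := by
    ext y; simp [Dominates, Set.mem_prod]
  have h1 : Set.Iio x.1 ∩ Set.Icc a b = Set.Ico a x.1 := by
    ext z; simp only [Set.mem_inter_iff, Set.mem_Iio, Set.mem_Icc, Set.mem_Ico]
    constructor
    · rintro ⟨h, h2, _⟩; exact ⟨h2, h⟩
    · rintro ⟨h, h2⟩; exact ⟨h2, h, by linarith⟩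
  have h2 : Set.Iio x.2 ∩ Set.Icc c d = Set.Ico c x.2 := by
    ext z; simp only [Set.mem_inter_iff, Set.mem_Iio, Set.mem_Icc, Set.mem_Ico]
    constructor
    · rintro ⟨h, h2, _⟩; exact ⟨h2, h⟩
    · rintro ⟨h, h2⟩; exact ⟨h2, h, by linarith⟩
  rw [unifRect, Measure.smul_apply, hset,
    Measure.restrict_apply (measurableSet_Iio.prod measurableSet_Iio),
    Set.prod_inter_prod, h1, h2, vol_rect hab hcd, MeasureTheory.Measure.volume_eq_prod,
    MeasureTheory.Measure.prod_prod, Real.volume_Ico, Real.volume_Ico, smul_eq_mul,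
    ← ENNReal.ofReal_mul (by linarith)]
  have key : ((x.1 - a)/(b-a)) * ((x.2 - c)/(d-c)) = ((x.1-a)*(x.2-c)) / ((b-a)*(d-c)) := by
    have h1 : b - a ≠ 0 := by linarith
    have h2 : d - c ≠ 0 := by linarith
    field_simp
  rw [key, ENNReal.ofReal_div_of_pos (by nlinarith), ENNReal.div_eq_inv_mul]

lemma rect_max (n : ℕ) :
    ∫ x in Set.Icc a b ×ˢ Set.Icc c d, (1 - ((b - x.1)/(b-a)) * ((d - x.2)/(d-c)))^n
      = (b-a)*(d-c)/(n+1) * ∑ k ∈ Finset.range (n+1), (1:ℝ)/(k+1) := by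
  have hcont : Continuous fun x : ℝ × ℝ => (1 - ((b - x.1)/(b-a)) * ((d - x.2)/(d-c)))^n := by
    fun_prop
  rw [MeasureTheory.Measure.volume_eq_prod, MeasureTheory.setIntegral_prod _
    (hcont.continuousOn.integrableOn_compact (isCompact_Icc.prod isCompact_Icc))]
  have hin : ∀ x : ℝ, ∫ y in Set.Icc c d, (1 - ((b - x)/(b-a)) * ((d - y)/(d-c)))^n
      = (d-c) * ((∑ k ∈ Finset.range (n+1), ((x-a)/(b-a))^k) / (n+1)) := by
    intro x
    have hba : b - a ≠ 0 := sub_ne_zero.2 hab.ne'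
    rw [aux_icc_int hcd (fun y => (1 - ((b - x)/(b-a)) * ((d - y)/(d-c)))^n)]
    have := aux_L2 hcd (fun s => (1 - ((b - x)/(b-a)) * s)^n)
    rw [this, aux_L1]
    have : 1 - (b - x)/(b-a) = (x-a)/(b-a) := by field_simp; ring
    rw [this]
  simp_rw [hin]
  rw [aux_icc_int hab]
  have := aux_L2' hab (fun s => (d-c) * ((∑ k ∈ Finset.range (n+1), s^k) / (n+1)))
  rw [this]
  rw [show (fun s => (d-c) * ((∑ k ∈ Finset.range (n+1), s^k) / (n+1)))
    = fun s => ((d-c)/(n+1)) * (∑ k ∈ Finset.range (n+1), s^k) from by funext s; ring] at *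
  rw [intervalIntegral.integral_const_mul, aux_L3]
  ring

lemma rect_min (n : ℕ) :
    ∫ x in Set.Icc a b ×ˢ Set.Icc c d, (1 - ((x.1 - a)/(b-a)) * ((x.2 - c)/(d-c)))^n
      = (b-a)*(d-c)/(n+1) * ∑ k ∈ Finset.range (n+1), (1:ℝ)/(k+1) := by
  have hcont : Continuous fun x : ℝ × ℝ => (1 - ((x.1 - a)/(b-a)) * ((x.2 - c)/(d-c)))^n := by
    fun_prop
  rw [MeasureTheory.Measure.volume_eq_prod, MeasureTheory.setIntegral_prod _
    (hcont.continuousOn.integrableOn_compact (isCompact_Icc.prod isCompact_Icc))]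
  have hin : ∀ x : ℝ, ∫ y in Set.Icc c d, (1 - ((x - a)/(b-a)) * ((y - c)/(d-c)))^n
      = (d-c) * ((∑ k ∈ Finset.range (n+1), ((b-x)/(b-a))^k) / (n+1)) := by
    intro x
    have hba : b - a ≠ 0 := sub_ne_zero.2 hab.ne'
    rw [aux_icc_int hcd (fun y => (1 - ((x - a)/(b-a)) * ((y - c)/(d-c)))^n)]
    have := aux_L2' hcd (fun s => (1 - ((x - a)/(b-a)) * s)^n)
    rw [this, aux_L1]
    have : 1 - (x - a)/(b-a) = (b-x)/(b-a) := by field_simp; ring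
    rw [this]
  simp_rw [hin]
  rw [aux_icc_int hab]
  have := aux_L2 hab (fun s => (d-c) * ((∑ k ∈ Finset.range (n+1), s^k) / (n+1)))
  rw [this]
  rw [show (fun s => (d-c) * ((∑ k ∈ Finset.range (n+1), s^k) / (n+1)))
    = fun s => ((d-c)/(n+1)) * (∑ k ∈ Finset.range (n+1), s^k) from by funext s; ring] at *
  rw [intervalIntegral.integral_const_mul, aux_L3]
  ring

lemma tfacts_max (x : ℝ × ℝ) (hx : x ∈ Set.Icc a b ×ˢ Set.Icc c d) :
    0 ≤ ((b - x.1)/(b-a)) * ((d - x.2)/(d-c)) ∧ ((b - x.1)/(b-a)) * ((d - x.2)/(d-c)) ≤ 1 := by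
  obtain ⟨⟨hx1, hx2⟩, hx3, hx4⟩ := hx
  have h1 : 0 ≤ (b - x.1)/(b-a) := div_nonneg (by linarith) (by linarith)
  have h2 : (b - x.1)/(b-a) ≤ 1 := (div_le_one (by linarith)).2 (by linarith)
  have h3 : 0 ≤ (d - x.2)/(d-c) := div_nonneg (by linarith) (by linarith)
  have h4 : (d - x.2)/(d-c) ≤ 1 := (div_le_one (by linarith)).2 (by linarith)
  exact ⟨mul_nonneg h1 h3, by nlinarith⟩

lemma tfacts_min (x : ℝ × ℝ) (hx : x ∈ Set.Icc a b ×ˢ Set.Icc c d) :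
    0 ≤ ((x.1 - a)/(b-a)) * ((x.2 - c)/(d-c)) ∧ ((x.1 - a)/(b-a)) * ((x.2 - c)/(d-c)) ≤ 1 := by
  obtain ⟨⟨hx1, hx2⟩, hx3, hx4⟩ := hx
  have h1 : 0 ≤ (x.1 - a)/(b-a) := div_nonneg (by linarith) (by linarith)
  have h2 : (x.1 - a)/(b-a) ≤ 1 := (div_le_one (by linarith)).2 (by linarith)
  have h3 : 0 ≤ (x.2 - c)/(d-c) := div_nonneg (by linarith) (by linarith)
  have h4 : (x.2 - c)/(d-c) ≤ 1 := (div_le_one (by linarith)).2 (by linarith)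
  exact ⟨mul_nonneg h1 h3, by nlinarith⟩

lemma probMax {m : ℕ} (n : ℕ) (hmn : m = n + 1) (i : Fin m) :
    ((Pm m a b c d) {X | IsMaximal X i}).toReal
      = (∑ k ∈ Finset.range m, (1:ℝ)/(k+1)) / m := by
  subst hmn
  haveI hP := unifRect_prob hab hcd
  set μ := unifRect a b c d with hμ
  set g : ℝ × ℝ → ℝ := fun x => 1 - ((b - x.1)/(b-a)) * ((d - x.2)/(d-c)) with hg
  set S : Set ((ℝ × ℝ) × (Fin n → ℝ × ℝ)) := {p | ∀ j, ¬ Dominates (p.2 j) p.1} with hS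
  have hSm : MeasurableSet S := by
    have : S = ⋂ j, {p : (ℝ × ℝ) × (Fin n → ℝ × ℝ) |
        p.1.1 < (p.2 j).1 ∧ p.1.2 < (p.2 j).2}ᶜ := by
      ext p; simp [hS, Set.mem_iInter, Dominates]
    rw [this]
    refine MeasurableSet.iInter fun j => MeasurableSet.compl ?_
    exact (measurableSet_lt measurable_fst.fst
        ((measurable_pi_apply j).comp measurable_snd).fst).inter
      (measurableSet_lt measurable_fst.snd ((measurable_pi_apply j).comp measurable_snd).snd)
  have hpre : {X : Fin (n+1) → ℝ × ℝ | IsMaximal X i}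
      = (MeasurableEquiv.piFinSuccAbove (fun _ => ℝ × ℝ) i) ⁻¹' S := by
    ext X
    have happ : (MeasurableEquiv.piFinSuccAbove (fun _ : Fin (n+1) => ℝ × ℝ) i) X
        = (X i, fun j => X (i.succAbove j)) := by
      simp [MeasurableEquiv.piFinSuccAbove]; rfl
    simp only [Set.mem_preimage, happ, hS, Set.mem_setOf_eq, IsMaximal]
    rw [Fin.forall_iff_succAbove i]
    simp [Dominates]
  have step1 : (Pm (n+1) a b c d) {X | IsMaximal X i}
      = (μ.prod (Measure.pi fun _ : Fin n => μ)) S := by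
    rw [Pm, hpre]
    exact (measurePreserving_piFinSuccAbove (fun _ => μ) i).measure_preimage
      hSm.nullMeasurableSet
  have step2 : (μ.prod (Measure.pi fun _ : Fin n => μ)) S
      = ∫⁻ x, (μ {y | Dominates y x}ᶜ)^n ∂μ := by
    rw [Measure.prod_apply hSm]
    refine lintegral_congr fun x => ?_
    have : Prod.mk x ⁻¹' S = Set.pi Set.univ (fun _ : Fin n => {y | Dominates y x}ᶜ) := by
      ext Y; simp [hS, Set.mem_pi]
    rw [this, Measure.pi_pi, Finset.prod_const, Finset.card_univ, Fintype.card_fin]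
  have hrectm : MeasurableSet (Set.Icc a b ×ˢ Set.Icc c d : Set (ℝ × ℝ)) :=
    measurableSet_Icc.prod measurableSet_Icc
  have hae : ∀ᵐ x ∂μ, x ∈ Set.Icc a b ×ˢ Set.Icc c d := by
    rw [hμ, unifRect]
    exact Measure.ae_smul_measure (ae_restrict_mem hrectm) _
  have step3 : ∫⁻ x, (μ {y | Dominates y x}ᶜ)^n ∂μ
      = ∫⁻ x, ENNReal.ofReal ((g x)^n) ∂μ := by
    refine lintegral_congr_ae (hae.mono fun x hx => ?_)
    obtain ⟨ht0, ht1⟩ := tfacts_max hab hcd x hx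
    have hdm : MeasurableSet {y : ℝ × ℝ | Dominates y x} := by
      have : {y : ℝ × ℝ | Dominates y x} = Set.Ioi x.1 ×ˢ Set.Ioi x.2 := by
        ext y; simp [Dominates, Set.mem_prod]
      rw [this]; exact measurableSet_Ioi.prod measurableSet_Ioi
    show μ {y | Dominates y x}ᶜ ^ n = ENNReal.ofReal (g x ^ n)
    rw [measure_compl hdm (measure_ne_top μ _),
      measure_univ, slice_max hab hcd x hx, ← ENNReal.ofReal_one,
      ← ENNReal.ofReal_sub _ ht0, ENNReal.ofReal_pow (by simpa [hg] using sub_nonneg.2 ht1)]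
  have hgsm : AEStronglyMeasurable (fun x => (g x)^n) μ := by
    apply Continuous.aestronglyMeasurable
    fun_prop
  have hgnn : 0 ≤ᵐ[μ] fun x => (g x)^n := hae.mono fun x hx => by
    obtain ⟨ht0, ht1⟩ := tfacts_max hab hcd x hx
    have : 0 ≤ g x := by simp [hg]; linarith
    positivity
  have step4 : (∫⁻ x, ENNReal.ofReal ((g x)^n) ∂μ).toReal = ∫ x, (g x)^n ∂μ :=
    (integral_eq_lintegral_of_nonneg_ae hgnn hgsm).symm
  rw [step1, step2, step3, step4, hμ, unifRect, MeasureTheory.integral_smul_measure,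
    vol_rect hab hcd]
  have hVr : (0:ℝ) < (b-a)*(d-c) := by nlinarith
  rw [ENNReal.toReal_inv, ENNReal.toReal_ofReal hVr.le, smul_eq_mul]
  have : ∫ x in Set.Icc a b ×ˢ Set.Icc c d, (g x)^n
      = (b-a)*(d-c)/(n+1) * ∑ k ∈ Finset.range (n+1), (1:ℝ)/(k+1) := rect_max hab hcd n
  rw [this]
  have hm1 : ((n:ℝ)+1) ≠ 0 := by positivity
  push_cast
  field_simp
  exact div_self hVr.ne'

lemma probMin {m : ℕ} (n : ℕ) (hmn : m = n + 1) (i : Fin m) :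
    ((Pm m a b c d) {X | IsMinimal X i}).toReal
      = (∑ k ∈ Finset.range m, (1:ℝ)/(k+1)) / m := by
  subst hmn
  haveI hP := unifRect_prob hab hcd
  set μ := unifRect a b c d with hμ
  set g : ℝ × ℝ → ℝ := fun x => 1 - ((x.1 - a)/(b-a)) * ((x.2 - c)/(d-c)) with hg
  set S : Set ((ℝ × ℝ) × (Fin n → ℝ × ℝ)) := {p | ∀ j, ¬ Dominates p.1 (p.2 j)} with hS
  have hSm : MeasurableSet S := by
    have : S = ⋂ j, {p : (ℝ × ℝ) × (Fin n → ℝ × ℝ) |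
        (p.2 j).1 < p.1.1 ∧ (p.2 j).2 < p.1.2}ᶜ := by
      ext p; simp [hS, Set.mem_iInter, Dominates]
    rw [this]
    refine MeasurableSet.iInter fun j => MeasurableSet.compl ?_
    exact (measurableSet_lt ((measurable_pi_apply j).comp measurable_snd).fst
        measurable_fst.fst).inter
      (measurableSet_lt ((measurable_pi_apply j).comp measurable_snd).snd measurable_fst.snd)
  have hpre : {X : Fin (n+1) → ℝ × ℝ | IsMinimal X i}
      = (MeasurableEquiv.piFinSuccAbove (fun _ => ℝ × ℝ) i) ⁻¹' S := by
    ext X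
    have happ : (MeasurableEquiv.piFinSuccAbove (fun _ : Fin (n+1) => ℝ × ℝ) i) X
        = (X i, fun j => X (i.succAbove j)) := by
      simp [MeasurableEquiv.piFinSuccAbove]; rfl
    simp only [Set.mem_preimage, happ, hS, Set.mem_setOf_eq, IsMinimal]
    rw [Fin.forall_iff_succAbove i]
    simp [Dominates]
  have step1 : (Pm (n+1) a b c d) {X | IsMinimal X i}
      = (μ.prod (Measure.pi fun _ : Fin n => μ)) S := by
    rw [Pm, hpre]
    exact (measurePreserving_piFinSuccAbove (fun _ => μ) i).measure_preimage
      hSm.nullMeasurableSet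
  have step2 : (μ.prod (Measure.pi fun _ : Fin n => μ)) S
      = ∫⁻ x, (μ {y | Dominates x y}ᶜ)^n ∂μ := by
    rw [Measure.prod_apply hSm]
    refine lintegral_congr fun x => ?_
    have : Prod.mk x ⁻¹' S = Set.pi Set.univ (fun _ : Fin n => {y | Dominates x y}ᶜ) := by
      ext Y; simp [hS, Set.mem_pi]
    rw [this, Measure.pi_pi, Finset.prod_const, Finset.card_univ, Fintype.card_fin]
  have hrectm : MeasurableSet (Set.Icc a b ×ˢ Set.Icc c d : Set (ℝ × ℝ)) :=
    measurableSet_Icc.prod measurableSet_Icc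
  have hae : ∀ᵐ x ∂μ, x ∈ Set.Icc a b ×ˢ Set.Icc c d := by
    rw [hμ, unifRect]
    exact Measure.ae_smul_measure (ae_restrict_mem hrectm) _
  have step3 : ∫⁻ x, (μ {y | Dominates x y}ᶜ)^n ∂μ
      = ∫⁻ x, ENNReal.ofReal ((g x)^n) ∂μ := by
    refine lintegral_congr_ae (hae.mono fun x hx => ?_)
    obtain ⟨ht0, ht1⟩ := tfacts_min hab hcd x hx
    have hdm : MeasurableSet {y : ℝ × ℝ | Dominates x y} := by
      have : {y : ℝ × ℝ | Dominates x y} = Set.Iio x.1 ×ˢ Set.Iio x.2 := by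
        ext y; simp [Dominates, Set.mem_prod]
      rw [this]; exact measurableSet_Iio.prod measurableSet_Iio
    show μ {y | Dominates x y}ᶜ ^ n = ENNReal.ofReal (g x ^ n)
    rw [measure_compl hdm (measure_ne_top μ _),
      measure_univ, slice_min hab hcd x hx, ← ENNReal.ofReal_one,
      ← ENNReal.ofReal_sub _ ht0, ENNReal.ofReal_pow (by simpa [hg] using sub_nonneg.2 ht1)]
  have hgsm : AEStronglyMeasurable (fun x => (g x)^n) μ := by
    apply Continuous.aestronglyMeasurable
    fun_prop
  have hgnn : 0 ≤ᵐ[μ] fun x => (g x)^n := hae.mono fun x hx => by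
    obtain ⟨ht0, ht1⟩ := tfacts_min hab hcd x hx
    have : 0 ≤ g x := by simp [hg]; linarith
    positivity
  have step4 : (∫⁻ x, ENNReal.ofReal ((g x)^n) ∂μ).toReal = ∫ x, (g x)^n ∂μ :=
    (integral_eq_lintegral_of_nonneg_ae hgnn hgsm).symm
  rw [step1, step2, step3, step4, hμ, unifRect, MeasureTheory.integral_smul_measure,
    vol_rect hab hcd]
  have hVr : (0:ℝ) < (b-a)*(d-c) := by nlinarith
  rw [ENNReal.toReal_inv, ENNReal.toReal_ofReal hVr.le, smul_eq_mul]
  have : ∫ x in Set.Icc a b ×ˢ Set.Icc c d, (g x)^n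
      = (b-a)*(d-c)/(n+1) * ∑ k ∈ Finset.range (n+1), (1:ℝ)/(k+1) := rect_min hab hcd n
  rw [this]
  have hm1 : ((n:ℝ)+1) ≠ 0 := by positivity
  push_cast
  field_simp
  exact div_self hVr.ne'

end main

lemma harmonic_cast (m : ℕ) : ((harmonic m : ℚ) : ℝ) = ∑ k ∈ Finset.range m, (1:ℝ)/(k+1) := by
  rw [harmonic]
  push_cast
  simp [one_div]

/-- For `m` points drawn independently and uniformly from a rectangle
of positive area, the expected number `E[M]` of maximal points satisfies
`log m ≤ E[M] ≤ log m + 1`; the same bounds hold for the number of minimal points. -/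
theorem expected_maxima_bounds (a b c d : ℝ) (hab : a < b) (hcd : c < d)
    (m : ℕ) (hm : 1 ≤ m) :
    (Real.log m ≤ ∫ X, (numMaximal X : ℝ) ∂(Pm m a b c d) ∧
      ∫ X, (numMaximal X : ℝ) ∂(Pm m a b c d) ≤ Real.log m + 1) ∧
    (Real.log m ≤ ∫ X, (numMinimal X : ℝ) ∂(Pm m a b c d) ∧
      ∫ X, (numMinimal X : ℝ) ∂(Pm m a b c d) ≤ Real.log m + 1) := by
  obtain ⟨n, rfl⟩ : ∃ n, m = n + 1 := ⟨m - 1, by omega⟩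
  haveI := unifRect_prob hab hcd
  haveI : IsProbabilityMeasure (Pm (n+1) a b c d) := by
    rw [Pm]; infer_instance
  have hmax : ∫ X, (numMaximal X : ℝ) ∂(Pm (n+1) a b c d)
      = ∑ k ∈ Finset.range (n+1), (1:ℝ)/(k+1) := by
    have h := exp_sum (Pm (n+1) a b c d) (fun X i => IsMaximal X i) measurable_isMaximal
    rw [show (fun X : Fin (n+1) → ℝ × ℝ => (numMaximal X : ℝ))
        = fun X => (Nat.card {i // IsMaximal X i} : ℝ) from rfl, h]
    rw [Finset.sum_congr rfl fun i _ => probMax hab hcd n rfl i]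
    rw [Finset.sum_const, Finset.card_univ, Fintype.card_fin, nsmul_eq_mul]
    have : ((n:ℝ)+1) ≠ 0 := by positivity
    push_cast
    field_simp
  have hmin : ∫ X, (numMinimal X : ℝ) ∂(Pm (n+1) a b c d)
      = ∑ k ∈ Finset.range (n+1), (1:ℝ)/(k+1) := by
    have h := exp_sum (Pm (n+1) a b c d) (fun X i => IsMinimal X i) measurable_isMinimal
    rw [show (fun X : Fin (n+1) → ℝ × ℝ => (numMinimal X : ℝ))
        = fun X => (Nat.card {i // IsMinimal X i} : ℝ) from rfl, h]
    rw [Finset.sum_congr rfl fun i _ => probMin hab hcd n rfl i]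
    rw [Finset.sum_const, Finset.card_univ, Fintype.card_fin, nsmul_eq_mul]
    have : ((n:ℝ)+1) ≠ 0 := by positivity
    push_cast
    field_simp
  have hH : ∑ k ∈ Finset.range (n+1), (1:ℝ)/(k+1) = ((harmonic (n+1) : ℚ) : ℝ) :=
    (harmonic_cast (n+1)).symm
  have hlow : Real.log (↑(n+1)) ≤ ((harmonic (n+1) : ℚ) : ℝ) := by
    calc Real.log (↑(n+1)) ≤ ((harmonic n : ℚ) : ℝ) := log_add_one_le_harmonic n
      _ ≤ ((harmonic (n+1) : ℚ) : ℝ) := by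
          rw [Rat.cast_le]
          rw [harmonic_succ]
          have : (0:ℚ) ≤ (↑(n+1))⁻¹ := by positivity
          linarith
  have hhigh : ((harmonic (n+1) : ℚ) : ℝ) ≤ Real.log (↑(n+1)) + 1 := by
    have := harmonic_le_one_add_log (n+1)
    linarith
  rw [hmax, hmin, hH]
  exact ⟨⟨hlow, hhigh⟩, hlow, hhigh⟩
end
end

section
/- Let X_1,…,X_m be drawn independently and uniformly at random from an axis-parallel rectangle [a,b]×[c,d] of positive area, and let M be the number of maximal points among X_1,…,X_m. Then E[M] = Σ_{i=1}^m 1/i, the m-th harmonic number. -/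
open MeasureTheory Real

noncomputable section

private lemma key1d (n : ℕ) (p q r : ℝ) (hpq : p < q) (hr : r ≠ 0) :
    (∫ x in p..q, (1 - (q - x) * r / (q - p)) ^ n) =
      (q - p) / (n + 1) * ∑ k ∈ Finset.range (n + 1), (1 - r) ^ k := by
  have hqp : q - p ≠ 0 := sub_ne_zero.2 hpq.ne'
  have hn1 : (n : ℝ) + 1 ≠ 0 := by positivity
  have h1 : (∫ x in p..q, (1 - (q - x) * r / (q - p)) ^ n)
      = ∫ x in (q - q)..(q - p), (1 - x * r / (q - p)) ^ n :=
    intervalIntegral.integral_comp_sub_left (fun w => (1 - w * r / (q - p)) ^ n) q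
  rw [h1]
  have h2 : ∀ x : ℝ, 1 - x * r / (q - p) = 1 - x * (r / (q - p)) := fun x => by ring
  simp only [h2, sub_self]
  have hc : r / (q - p) ≠ 0 := div_ne_zero hr hqp
  rw [intervalIntegral.integral_comp_mul_right (fun y => (1 - y) ^ n) hc]
  have h3 : (q - p) * (r / (q - p)) = r := by field_simp
  rw [zero_mul, h3]
  rw [show (∫ x in (0:ℝ)..r, (1 - x) ^ n) = ∫ x in (1 - r)..(1 - 0), x ^ n from
    intervalIntegral.integral_comp_sub_left (fun y => y ^ n) 1]
  rw [integral_pow]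
  have hgeom : ∑ k ∈ Finset.range (n + 1), (1 - r) ^ k
      = ((1 - r) ^ (n + 1) - 1) / ((1 - r) - 1) :=
    geom_sum_eq (fun h => hr (by linarith [h])) _
  rw [hgeom]
  have h4 : (1 - r) - 1 ≠ 0 := by intro h; apply hr; linarith
  rw [smul_eq_mul]
  field_simp
  ring

private lemma key1d' (k : ℕ) (p q : ℝ) (hpq : p < q) :
    (∫ x in p..q, ((x - p) / (q - p)) ^ k) = (q - p) / (k + 1) := by
  have hqp : q - p ≠ 0 := sub_ne_zero.2 hpq.ne'
  rw [show (∫ x in p..q, ((x - p) / (q - p)) ^ k) = ∫ x in (p - p)..(q - p), (x / (q - p)) ^ k from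
    intervalIntegral.integral_comp_sub_right (fun w => (w / (q - p)) ^ k) p]
  rw [intervalIntegral.integral_comp_div (fun y => y ^ k) hqp]
  rw [sub_self, zero_div, div_self hqp, integral_pow]
  simp [smul_eq_mul]
  field_simp

private lemma calc2d (n : ℕ) (a b c d : ℝ) (hab : a < b) (hcd : c < d) :
    (∫ x in Set.Icc a b ×ˢ Set.Icc c d,
        (1 - (b - x.1) * (d - x.2) / ((b - a) * (d - c))) ^ n) =
      (b - a) * (d - c) / (n + 1) * ∑ k ∈ Finset.range (n + 1), (1 : ℝ) / (k + 1) := by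
  have hba : b - a ≠ 0 := sub_ne_zero.2 hab.ne'
  have hdc : d - c ≠ 0 := sub_ne_zero.2 hcd.ne'
  set f : ℝ × ℝ → ℝ := fun x => (1 - (b - x.1) * (d - x.2) / ((b - a) * (d - c))) ^ n with hf
  have hfc : Continuous f := by fun_prop
  set ν₁ := volume.restrict (Set.Icc a b) with hν₁
  set ν₂ := volume.restrict (Set.Icc c d) with hν₂
  have h0 : (volume : Measure (ℝ × ℝ)).restrict (Set.Icc a b ×ˢ Set.Icc c d) = ν₁.prod ν₂ := by
    rw [Measure.volume_eq_prod, Measure.prod_restrict]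
  have hint : IntegrableOn f (Set.Icc a b ×ˢ Set.Icc c d) volume :=
    hfc.continuousOn.integrableOn_compact (isCompact_Icc.prod isCompact_Icc)
  have hI : Integrable f (ν₁.prod ν₂) := h0 ▸ hint
  have hfub : (∫ x in Set.Icc a b ×ˢ Set.Icc c d, f x) = ∫ u, ∫ v, f (u, v) ∂ν₂ ∂ν₁ := by
    rw [show (∫ x in Set.Icc a b ×ˢ Set.Icc c d, f x) = ∫ x, f x ∂(ν₁.prod ν₂) from by
      rw [← h0]]
    exact integral_prod f hI
  rw [hfub]
  have hinner : ∀ u : ℝ, u ≠ b → (∫ v, f (u, v) ∂ν₂)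
      = (d - c) / (n + 1) * ∑ k ∈ Finset.range (n + 1), ((u - a) / (b - a)) ^ k := by
    intro u hu
    have h1 : (∫ v, f (u, v) ∂ν₂) = ∫ v in c..d, f (u, v) := by
      rw [hν₂, intervalIntegral.integral_of_le hcd.le, ← integral_Icc_eq_integral_Ioc]
    rw [h1]
    have hr : (b - u) / (b - a) ≠ 0 := div_ne_zero (sub_ne_zero.2 (Ne.symm hu)) hba
    have hxy : ∀ v, f (u, v) = (1 - (d - v) * ((b - u) / (b - a)) / (d - c)) ^ n := by
      intro v
      have h5 : (b - u) * (d - v) / ((b - a) * (d - c))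
          = (d - v) * ((b - u) / (b - a)) / (d - c) := by
        field_simp
      simp only [hf, h5]
    simp only [hxy]
    rw [key1d n c d ((b - u) / (b - a)) hcd hr]
    congr 1
    apply Finset.sum_congr rfl
    intro k _
    congr 1
    field_simp
    ring
  have hae : ∀ᵐ u ∂ν₁, (∫ v, f (u, v) ∂ν₂)
      = (d - c) / (n + 1) * ∑ k ∈ Finset.range (n + 1), ((u - a) / (b - a)) ^ k := by
    have hb : ∀ᵐ u : ℝ, u ≠ b := by
      rw [ae_iff]
      have : {u : ℝ | ¬u ≠ b} = {b} := by ext u; simp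
      rw [this]; exact Real.volume_singleton
    exact ae_restrict_of_ae (hb.mono fun u hu => hinner u hu)
  rw [integral_congr_ae hae]
  have houter : (∫ u, (d - c) / (n + 1) *
      ∑ k ∈ Finset.range (n + 1), ((u - a) / (b - a)) ^ k ∂ν₁)
      = ∫ u in a..b, (d - c) / (n + 1) * ∑ k ∈ Finset.range (n + 1), ((u - a) / (b - a)) ^ k := by
    rw [hν₁, intervalIntegral.integral_of_le hab.le, ← integral_Icc_eq_integral_Ioc]
  rw [houter, intervalIntegral.integral_const_mul]
  have hsum : (∫ u in a..b, ∑ k ∈ Finset.range (n + 1), ((u - a) / (b - a)) ^ k)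
      = ∑ k ∈ Finset.range (n + 1), (b - a) / (k + 1) := by
    rw [intervalIntegral.integral_finset_sum]
    · exact Finset.sum_congr rfl fun k _ => key1d' k a b hab
    · intro k _
      exact (((continuous_id.sub continuous_const).div_const _).pow k).intervalIntegrable a b
  rw [hsum]
  rw [Finset.mul_sum, Finset.mul_sum]
  apply Finset.sum_congr rfl
  intro k _
  have hk : (k : ℝ) + 1 ≠ 0 := by positivity
  field_simp

/-- For `m` points drawn independently and uniformly from a rectangle
of positive area, the expected number of maximal points equals the `m`-th harmonic
number `Σ_{i=1}^m 1/i`. -/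
theorem expected_maxima_harmonic (a b c d : ℝ) (hab : a < b) (hcd : c < d)
    (m : ℕ) (hm : 1 ≤ m) :
    ∫ X, (numMaximal X : ℝ) ∂(Pm m a b c d) =
      ∑ i ∈ Finset.range m, (1 : ℝ) / (i + 1) := by
  classical
  obtain ⟨n, rfl⟩ : ∃ n, m = n + 1 := ⟨m - 1, (Nat.succ_pred_eq_of_pos hm).symm⟩
  have hba : (0:ℝ) < b - a := sub_pos.2 hab
  have hdc : (0:ℝ) < d - c := sub_pos.2 hcd
  set A : ℝ := (b - a) * (d - c) with hA
  have hA0 : 0 < A := mul_pos hba hdc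
  set rect : Set (ℝ × ℝ) := Set.Icc a b ×ˢ Set.Icc c d with hrect
  have hrectm : MeasurableSet rect := measurableSet_Icc.prod measurableSet_Icc
  have hvol : volume rect = ENNReal.ofReal A := by
    rw [hrect, Measure.volume_eq_prod, Measure.prod_prod, Real.volume_Icc, Real.volume_Icc,
      ← ENNReal.ofReal_mul (by linarith)]
  set μ := unifRect a b c d with hμ
  have hμdef : μ = (ENNReal.ofReal A)⁻¹ • volume.restrict rect := by
    rw [hμ, unifRect, ← hrect, hvol]
  have hAne : ENNReal.ofReal A ≠ 0 := (ENNReal.ofReal_pos.2 hA0).ne'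
  have hAnetop : (ENNReal.ofReal A)⁻¹ ≠ ⊤ := ENNReal.inv_ne_top.2 hAne
  haveI hprob : IsProbabilityMeasure μ := by
    constructor
    rw [hμdef, Measure.smul_apply, Measure.restrict_apply_univ, hvol, smul_eq_mul,
      ENNReal.inv_mul_cancel hAne ENNReal.ofReal_ne_top]
  have hPmdef : Pm (n + 1) a b c d = Measure.pi fun _ : Fin (n + 1) => μ := rfl
  rw [hPmdef]
  -- measurability of the maximality events
  have hSm : ∀ (N : ℕ) (i : Fin N), MeasurableSet {X : Fin N → ℝ × ℝ | IsMaximal X i} := by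
    intro N i
    have h1 : {X : Fin N → ℝ × ℝ | IsMaximal X i} =
        ⋂ j, ({X : Fin N → ℝ × ℝ | (X i).1 < (X j).1} ∩ {X | (X i).2 < (X j).2})ᶜ := by
      ext X
      simp [IsMaximal, Dominates, Set.mem_iInter]
    rw [h1]
    refine MeasurableSet.iInter fun j => (MeasurableSet.inter ?_ ?_).compl
    · exact measurableSet_lt (measurable_fst.comp (measurable_pi_apply i))
        (measurable_fst.comp (measurable_pi_apply j))
    · exact measurableSet_lt (measurable_snd.comp (measurable_pi_apply i))
        (measurable_snd.comp (measurable_pi_apply j))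
  -- counting as a sum of indicators
  have hcount : ∀ X : Fin (n + 1) → ℝ × ℝ, (numMaximal X : ℝ)
      = ∑ i : Fin (n + 1),
          Set.indicator {Y : Fin (n + 1) → ℝ × ℝ | IsMaximal Y i} (fun _ => (1:ℝ)) X := by
    intro X
    rw [numMaximal, Nat.card_eq_fintype_card, Fintype.card_subtype]
    push_cast [Finset.card_filter]
    apply Finset.sum_congr rfl
    intro i _
    by_cases h : IsMaximal X i <;> simp [h, Set.indicator]
  have hP := (Measure.pi fun _ : Fin (n + 1) => μ)
  have hstep1 : (∫ X, (numMaximal X : ℝ) ∂(Measure.pi fun _ : Fin (n + 1) => μ))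
      = ∑ i : Fin (n + 1),
          ((Measure.pi fun _ : Fin (n + 1) => μ) {Y | IsMaximal Y i}).toReal := by
    rw [integral_congr_ae (Filter.Eventually.of_forall hcount)]
    rw [integral_finset_sum _ (fun i _ => (integrable_const (1:ℝ)).indicator (hSm _ i))]
    refine Finset.sum_congr rfl fun i _ => ?_
    rw [integral_indicator_const _ (hSm _ i)]
    simp
    rfl
  rw [hstep1]
  -- symmetry: all events have the same probability
  have hswap : ∀ i : Fin (n + 1),
      (Measure.pi fun _ : Fin (n + 1) => μ) {Y | IsMaximal Y i}
        = (Measure.pi fun _ : Fin (n + 1) => μ) {Y | IsMaximal Y 0} := by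
    intro i
    set σ : Equiv.Perm (Fin (n + 1)) := Equiv.swap 0 i with hσ
    have hmp : MeasurePreserving
        (MeasurableEquiv.piCongrLeft (fun _ : Fin (n + 1) => ℝ × ℝ) σ)
        (Measure.pi fun _ => μ) (Measure.pi fun _ => μ) :=
      measurePreserving_piCongrLeft (fun _ => μ) σ
    have hΦ : ∀ (X : Fin (n + 1) → ℝ × ℝ) (j),
        (MeasurableEquiv.piCongrLeft (fun _ : Fin (n + 1) => ℝ × ℝ) σ) X j
          = X (σ.symm j) := by
      intro X j
      rw [MeasurableEquiv.coe_piCongrLeft]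
      simp [Equiv.piCongrLeft_apply_eq_cast]
    have hpre : (MeasurableEquiv.piCongrLeft (fun _ : Fin (n + 1) => ℝ × ℝ) σ) ⁻¹'
        {Y | IsMaximal Y i} = {Y | IsMaximal Y 0} := by
      ext X
      simp only [Set.mem_preimage, Set.mem_setOf_eq]
      have hσ0 : σ.symm i = 0 := by simp [hσ]
      constructor
      · intro h j
        have h2 := h (σ j)
        rw [hΦ X (σ j), hΦ X i, hσ0, Equiv.symm_apply_apply] at h2
        exact h2
      · intro h j
        rw [hΦ X j, hΦ X i, hσ0]
        exact h (σ.symm j)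
    have h7 := hmp.measure_preimage (hSm _ i).nullMeasurableSet
    rw [hpre] at h7
    exact h7.symm
  have hstep2 : (∑ i : Fin (n + 1),
      ((Measure.pi fun _ : Fin (n + 1) => μ) {Y | IsMaximal Y i}).toReal)
      = (n + 1 : ℝ) * ((Measure.pi fun _ : Fin (n + 1) => μ) {Y | IsMaximal Y 0}).toReal := by
    rw [Finset.sum_congr rfl (fun i _ => by rw [hswap i])]
    rw [Finset.sum_const, Finset.card_univ, Fintype.card_fin, nsmul_eq_mul]
    push_cast
    ring
  rw [hstep2]
  -- compute the probability that X 0 is maximal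
  set ν : Measure (Fin n → ℝ × ℝ) := Measure.pi fun _ => μ with hν
  have hT : MeasurableSet {p : (ℝ × ℝ) × (Fin n → ℝ × ℝ) | ∀ j, ¬ Dominates (p.2 j) p.1} := by
    have h1 : {p : (ℝ × ℝ) × (Fin n → ℝ × ℝ) | ∀ j, ¬ Dominates (p.2 j) p.1}
        = ⋂ j, ({p : (ℝ × ℝ) × (Fin n → ℝ × ℝ) | p.1.1 < (p.2 j).1}
            ∩ {p | p.1.2 < (p.2 j).2})ᶜ := by
      ext p; simp [Dominates, Set.mem_iInter]
    rw [h1]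
    refine MeasurableSet.iInter fun j => (MeasurableSet.inter ?_ ?_).compl
    · exact measurableSet_lt measurable_fst.fst (((measurable_pi_apply j).comp measurable_snd).fst)
    · exact measurableSet_lt measurable_fst.snd (((measurable_pi_apply j).comp measurable_snd).snd)
  have he : {Y : Fin (n + 1) → ℝ × ℝ | IsMaximal Y 0} =
      (MeasurableEquiv.piFinSuccAbove (fun _ : Fin (n + 1) => ℝ × ℝ) 0) ⁻¹'
        {p : (ℝ × ℝ) × (Fin n → ℝ × ℝ) | ∀ j, ¬ Dominates (p.2 j) p.1} := by
    ext X
    simp only [Set.mem_preimage, Set.mem_setOf_eq, MeasurableEquiv.piFinSuccAbove_apply,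
      Fin.removeNth, Fin.succAbove_zero]
    constructor
    · intro h j
      exact h (Fin.succ j)
    · intro h j
      refine Fin.cases ?_ ?_ j
      · simp [IsMaximal, Dominates]
      · intro k
        exact h k
  have hmp2 := (measurePreserving_piFinSuccAbove (fun _ : Fin (n + 1) => μ) 0).measure_preimage
    hT.nullMeasurableSet
  rw [he, hmp2]
  have hDm : ∀ x : ℝ × ℝ, MeasurableSet {y : ℝ × ℝ | Dominates y x} := by
    intro x
    have h1 : {y : ℝ × ℝ | Dominates y x} = Set.Ioi x.1 ×ˢ Set.Ioi x.2 := by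
      ext y; simp [Dominates, Set.mem_prod]
    rw [h1]; exact measurableSet_Ioi.prod measurableSet_Ioi
  have hprod : ((μ.prod (Measure.pi fun _ : Fin n => μ))
        {p : (ℝ × ℝ) × (Fin n → ℝ × ℝ) | ∀ j, ¬ Dominates (p.2 j) p.1})
      = ∫⁻ x, (μ {y | ¬ Dominates y x}) ^ n ∂μ := by
    rw [Measure.prod_apply hT]
    refine lintegral_congr fun x => ?_
    have h1 : (Prod.mk x ⁻¹' {p : (ℝ × ℝ) × (Fin n → ℝ × ℝ) | ∀ j, ¬ Dominates (p.2 j) p.1})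
        = Set.pi Set.univ (fun _ : Fin n => {y | ¬ Dominates y x}) := by
      ext Y; simp [Set.mem_pi]
    rw [h1, Measure.pi_pi]
    simp
  rw [hprod]
  -- pointwise value of the complement probability
  have hq : ∀ x ∈ rect, μ {y | ¬ Dominates y x}
      = ENNReal.ofReal (1 - (b - x.1) * (d - x.2) / A) := by
    intro x hx
    rw [hrect] at hx
    simp only [Set.mem_prod, Set.mem_Icc] at hx
    obtain ⟨⟨hax, hxb⟩, hcx, hxd⟩ := hx
    have h1 : {y : ℝ × ℝ | ¬ Dominates y x} = {y | Dominates y x}ᶜ := rfl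
    rw [h1, measure_compl (hDm x) (measure_ne_top μ _), measure_univ]
    have hDval : μ {y | Dominates y x} = ENNReal.ofReal ((b - x.1) * (d - x.2) / A) := by
      rw [hμdef, Measure.smul_apply, Measure.restrict_apply (hDm x)]
      have h2 : {y : ℝ × ℝ | Dominates y x} ∩ rect = Set.Ioc x.1 b ×ˢ Set.Ioc x.2 d := by
        rw [show {y : ℝ × ℝ | Dominates y x} = Set.Ioi x.1 ×ˢ Set.Ioi x.2 from by
            ext y; simp [Dominates, Set.mem_prod],
          hrect, Set.prod_inter_prod]
        congr 1
        · ext y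
          simp only [Set.mem_inter_iff, Set.mem_Ioi, Set.mem_Icc, Set.mem_Ioc]
          constructor
          · rintro ⟨h3, h4, h5⟩; exact ⟨h3, h5⟩
          · rintro ⟨h3, h5⟩; exact ⟨h3, by linarith, h5⟩
        · ext y
          simp only [Set.mem_inter_iff, Set.mem_Ioi, Set.mem_Icc, Set.mem_Ioc]
          constructor
          · rintro ⟨h3, h4, h5⟩; exact ⟨h3, h5⟩
          · rintro ⟨h3, h5⟩; exact ⟨h3, by linarith, h5⟩
      rw [h2, Measure.volume_eq_prod, Measure.prod_prod, Real.volume_Ioc, Real.volume_Ioc,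
        ← ENNReal.ofReal_mul (by linarith), smul_eq_mul, ← ENNReal.ofReal_inv_of_pos hA0,
        ← ENNReal.ofReal_mul (inv_nonneg.2 hA0.le)]
      congr 1
      rw [inv_mul_eq_div]
    rw [hDval, ← ENNReal.ofReal_one, ← ENNReal.ofReal_sub 1 (div_nonneg (mul_nonneg (by linarith) (by linarith)) hA0.le)]
  have haeμ : ∀ᵐ x ∂μ, x ∈ rect := by
    rw [ae_iff]
    have h1 : {x : ℝ × ℝ | ¬ x ∈ rect} = rectᶜ := rfl
    rw [h1, hμdef, Measure.smul_apply, Measure.restrict_apply hrectm.compl]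
    simp
  have hbound : ∀ x ∈ rect, 0 ≤ (b - x.1) * (d - x.2) / A ∧ (b - x.1) * (d - x.2) / A ≤ 1 := by
    intro x hx
    rw [hrect] at hx
    simp only [Set.mem_prod, Set.mem_Icc] at hx
    obtain ⟨⟨hax, hxb⟩, hcx, hxd⟩ := hx
    have h1 : (b - x.1) * (d - x.2) ≤ A := by
      rw [hA]
      apply mul_le_mul <;> linarith
    refine ⟨div_nonneg (mul_nonneg (by linarith) (by linarith)) hA0.le, ?_⟩
    rw [div_le_one hA0]
    exact h1
  set g : ℝ × ℝ → ℝ := fun x => (1 - (b - x.1) * (d - x.2) / A) ^ n with hg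
  have hLint : (∫⁻ x, (μ {y | ¬ Dominates y x}) ^ n ∂μ) = ∫⁻ x, ENNReal.ofReal (g x) ∂μ := by
    refine lintegral_congr_ae (haeμ.mono fun x hx => ?_)
    show μ {y | ¬Dominates y x} ^ n = ENNReal.ofReal (g x)
    rw [hq x hx]
    exact (ENNReal.ofReal_pow (by linarith [(hbound x hx).2]) n).symm
  rw [hLint]
  have hgc : Continuous g := by fun_prop
  have hgint : Integrable g μ := by
    rw [hμdef]
    refine Integrable.smul_measure ?_ hAnetop
    rw [hrect]
    exact hgc.continuousOn.integrableOn_compact (isCompact_Icc.prod isCompact_Icc)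
  have hgnn : 0 ≤ᵐ[μ] g := haeμ.mono fun x hx => pow_nonneg (by linarith [(hbound x hx).2]) n
  rw [← ofReal_integral_eq_lintegral_ofReal hgint hgnn]
  have hS0 : (0:ℝ) ≤ ∑ k ∈ Finset.range (n + 1), (1:ℝ) / (k + 1) :=
    Finset.sum_nonneg fun k _ => by positivity
  have hn1 : (n : ℝ) + 1 ≠ 0 := by positivity
  have hIμ : (∫ x, g x ∂μ) = (∑ k ∈ Finset.range (n + 1), (1:ℝ) / (k + 1)) / (n + 1) := by
    rw [hμdef, integral_smul_measure, ENNReal.toReal_inv, ENNReal.toReal_ofReal hA0.le]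
    have h9 : (∫ x, g x ∂(volume.restrict rect))
        = A / (n + 1) * ∑ k ∈ Finset.range (n + 1), (1:ℝ) / (k + 1) := by
      rw [hrect, hg, hA]
      exact calc2d n a b c d hab hcd
    rw [h9, smul_eq_mul]
    field_simp
  rw [hIμ, ENNReal.toReal_ofReal (by positivity)]
  field_simp
end
end

section
/- Let B be a binomial random variable with parameters m (number of trials) and p ∈ [0,1] (success probability), and let l be a positive integer with mp < l. Then Pr{ B ≥ l } ≤ (mpe/l)^l / (1 − mp/l). -/
open MeasureTheory ProbabilityTheory Real

noncomputable section

/-- Let `B = Σ_i Y i` be a binomial random variable with parameters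
`m` and `p ∈ [0,1]`, i.e. the sum of `m` independent Bernoulli(`p`) random variables,
and let `l` be a positive integer with `mp < l`.  Then
`Pr{ B ≥ l } ≤ (mpe/l)^l / (1 − mp/l)`. -/
theorem binomial_tail_bound {Ω : Type*} [MeasurableSpace Ω] (P : Measure Ω)
    [IsProbabilityMeasure P] (m : ℕ) (p : ℝ) (hp0 : 0 ≤ p) (hp1 : p ≤ 1)
    (Y : Fin m → Ω → ℝ)
    (hmeas : ∀ i, Measurable (Y i))
    (h01 : ∀ i ω, Y i ω = 0 ∨ Y i ω = 1)
    (hbern : ∀ i, P {ω | Y i ω = 1} = ENNReal.ofReal p)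
    (hindep : iIndepFun Y P)
    (l : ℕ) (hl : 0 < l) (hlt : m * p < l) :
    (P {ω | (l : ℝ) ≤ ∑ i, Y i ω}).toReal ≤
      (m * p * Real.exp 1 / l) ^ l / (1 - m * p / l) := by
  set A : Fin m → Set Ω := fun i => {ω | Y i ω = 1} with hA
  have hlpos : (0:ℝ) < l := Nat.cast_pos.mpr hl
  -- measure of each intersection
  have hmeasInter : ∀ s : Finset (Fin m), P (⋂ i ∈ s, A i) = ENNReal.ofReal p ^ s.card := by
    intro s
    rw [hindep.meas_biInter (s := A) (fun i _ => ⟨{1}, measurableSet_singleton 1, rfl⟩)]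
    simp [hA, hbern, Finset.prod_const]
  -- union bound inclusion
  have hsub : {ω | (l : ℝ) ≤ ∑ i, Y i ω} ⊆
      ⋃ s ∈ Finset.powersetCard l (Finset.univ : Finset (Fin m)), ⋂ i ∈ s, A i := by
    intro ω hω
    simp only [Set.mem_setOf_eq] at hω
    set T : Finset (Fin m) := Finset.univ.filter (fun i => Y i ω = 1) with hT
    have hsum : ∑ i, Y i ω = T.card := by
      rw [← Finset.sum_subset (Finset.subset_univ T) ?_]
      · rw [Finset.sum_congr rfl (fun i hi => (Finset.mem_filter.mp hi).2)]
        simp [hT]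
      · intro i _ hi
        rcases h01 i ω with h | h
        · exact h
        · exact absurd (Finset.mem_filter.mpr ⟨Finset.mem_univ i, h⟩) hi
    have hcard : l ≤ T.card := by
      have := hω.trans_eq hsum
      exact_mod_cast this
    obtain ⟨s, hsT, hscard⟩ := Finset.exists_subset_card_eq hcard
    refine Set.mem_biUnion (x := s)
      (Finset.mem_powersetCard.mpr ⟨Finset.subset_univ s, hscard⟩)
      (Set.mem_biInter fun i hi => (Finset.mem_filter.mp (hsT hi)).2)
  -- union bound
  have hbound : P {ω | (l : ℝ) ≤ ∑ i, Y i ω} ≤ ENNReal.ofReal ((m.choose l : ℝ) * p ^ l) := by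
    calc P {ω | (l : ℝ) ≤ ∑ i, Y i ω}
        ≤ P (⋃ s ∈ Finset.powersetCard l (Finset.univ : Finset (Fin m)), ⋂ i ∈ s, A i) :=
          measure_mono hsub
      _ ≤ ∑ s ∈ Finset.powersetCard l (Finset.univ : Finset (Fin m)), P (⋂ i ∈ s, A i) :=
          measure_biUnion_finset_le _ _
      _ = ENNReal.ofReal ((m.choose l : ℝ) * p ^ l) := by
          rw [Finset.sum_congr rfl (fun s hs => by
            rw [hmeasInter s, (Finset.mem_powersetCard.mp hs).2])]
          rw [Finset.sum_const, Finset.card_powersetCard, Finset.card_univ, Fintype.card_fin]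
          rw [ENNReal.ofReal_mul (by positivity), ← ENNReal.ofReal_pow hp0,
            ENNReal.ofReal_natCast, nsmul_eq_mul]
  have htoReal : (P {ω | (l : ℝ) ≤ ∑ i, Y i ω}).toReal ≤ (m.choose l : ℝ) * p ^ l :=
    ENNReal.toReal_le_of_le_ofReal (by positivity) hbound
  refine htoReal.trans ?_
  -- real arithmetic
  have hq0 : (0:ℝ) ≤ m * p := by positivity
  have hd1 : 1 - m * p / l ≤ 1 := by
    have : 0 ≤ m * p / l := by positivity
    linarith
  have hd0 : 0 < 1 - m * p / l := by
    have : m * p / l < 1 := (div_lt_one hlpos).mpr hlt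
    linarith
  have hnum0 : (0:ℝ) ≤ (m * p * Real.exp 1 / l) ^ l := by positivity
  have key : (m.choose l : ℝ) * p ^ l ≤ (m * p * Real.exp 1 / l) ^ l := by
    have hchoose : (m.choose l : ℝ) ≤ (m:ℝ) ^ l / l.factorial := Nat.choose_le_pow_div l m
    have hfact : (l:ℝ) ^ l / l.factorial ≤ Real.exp l := by
      calc (l:ℝ) ^ l / l.factorial ≤ ∑ i ∈ Finset.range (l+1), (l:ℝ) ^ i / i.factorial := by
            exact Finset.single_le_sum (f := fun i => (l:ℝ) ^ i / i.factorial)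
              (fun i _ => by positivity) (Finset.self_mem_range_succ l)
        _ ≤ Real.exp l := Real.sum_le_exp_of_nonneg hlpos.le _
    have hexp : Real.exp (l:ℝ) = Real.exp 1 ^ l := by
      rw [← Real.exp_nat_mul]; ring_nf
    have hfactpos : (0:ℝ) < l.factorial := by positivity
    have h1 : ((1:ℝ) / l.factorial) ≤ Real.exp 1 ^ l / (l:ℝ) ^ l := by
      rw [div_le_div_iff₀ hfactpos (by positivity)]
      have := hfact
      rw [div_le_iff₀ hfactpos, hexp] at this
      linarith
    calc (m.choose l : ℝ) * p ^ l ≤ ((m:ℝ) ^ l / l.factorial) * p ^ l := by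
          apply mul_le_mul_of_nonneg_right hchoose (by positivity)
      _ = (m * p) ^ l * (1 / l.factorial) := by rw [mul_pow]; ring
      _ ≤ (m * p) ^ l * (Real.exp 1 ^ l / (l:ℝ) ^ l) :=
          mul_le_mul_of_nonneg_left h1 (by positivity)
      _ = (m * p * Real.exp 1 / l) ^ l := by
          rw [div_pow, mul_pow, mul_pow]; ring
  calc (m.choose l : ℝ) * p ^ l ≤ (m * p * Real.exp 1 / l) ^ l := key
    _ ≤ (m * p * Real.exp 1 / l) ^ l / (1 - m * p / l) := by
        rw [le_div_iff₀ hd0]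
        nlinarith [hnum0]
end
end
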